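/- arXiv:1502.01412 — 4 statements merged into one kernel-verified Lean document; each statement's English description precedes it below -/
import Mathlib

section
/- Let M be an n×n complex matrix whose underlying directed graph (with an arc from i to j whenever M_{ij} ≠ 0) is strongly connected with period p. Then the set of non-zero eigenvalues of M (with algebraic multiplicity) is invariant under multiplication by e^{2πi/p}; more precisely, for every non-zero complex number λ and every p-th root of unity ζ, the algebraic multiplicity of λ as an eigenvalue of M equals the algebraic multiplicity of ζλ. -/
/-- There is a walk of length `l` from `i` to `j` in the digraph given by the relation `R`. -/
def HasWalk {n : ℕ} (R : Fin n → Fin n → Prop) (i j : Fin n) (l : ℕ) : Prop :=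
  ∃ f : ℕ → Fin n, f 0 = i ∧ f l = j ∧ ∀ k < l, R (f k) (f (k + 1))

open Polynomial Matrix

lemma hasWalk_single {n : ℕ} {R : Fin n → Fin n → Prop} {i j : Fin n} (h : R i j) :
    HasWalk R i j 1 := by
  refine ⟨fun k => if k = 0 then i else j, by simp, by simp, ?_⟩
  intro k hk
  interval_cases k
  simpa using h

lemma hasWalk_trans {n : ℕ} {R : Fin n → Fin n → Prop} {i j k : Fin n} {l1 l2 : ℕ}
    (h1 : HasWalk R i j l1) (h2 : HasWalk R j k l2) : HasWalk R i k (l1 + l2) := by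
  obtain ⟨f, hf0, hfl, hf⟩ := h1
  obtain ⟨g, hg0, hgl, hg⟩ := h2
  refine ⟨fun m => if m ≤ l1 then f m else g (m - l1), by simp [hf0], ?_, ?_⟩
  · by_cases h2z : l2 = 0
    · subst h2z
      simp only [add_zero, le_refl, if_pos]
      rw [hfl, ← hg0, hgl]
    · have hnle : ¬ (l1 + l2 ≤ l1) := by omega
      simp only [hnle, if_neg, not_false_iff]
      rw [show l1 + l2 - l1 = l2 by omega, hgl]
  · intro m hm
    by_cases hc1 : m + 1 ≤ l1
    · have h1' : m ≤ l1 := by omega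
      simp only [h1', hc1, if_pos]
      exact hf m (by omega)
    · by_cases hc2 : m ≤ l1
      · have hml1 : m = l1 := by omega
        have hl2pos : 0 < l2 := by omega
        simp only [hc2, if_pos, hc1, if_neg, not_false_iff]
        rw [hml1, show l1 + 1 - l1 = 1 from by omega, hfl, ← hg0]
        exact hg 0 hl2pos
      · simp only [hc2, hc1, if_neg, not_false_iff]
        rw [show m + 1 - l1 = (m - l1) + 1 from by omega]
        exact hg (m - l1) (by omega)

lemma pow_eq_of_modEq {ζ : ℂ} {p : ℕ} (hζ : ζ ^ p = 1) {a b : ℕ} (h : a % p = b % p) :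
    ζ ^ a = ζ ^ b := by
  have key : ∀ c : ℕ, ζ ^ c = ζ ^ (c % p) := by
    intro c
    conv_lhs => rw [← Nat.div_add_mod c p]
    rw [pow_add, pow_mul, hζ, one_pow, one_mul]
  rw [key a, key b, h]

lemma conj_entry (a b m : ℂ) (h : a * b = 1) :
    C a * (X - C m) * C b = X - C (a * m * b) := by
  have hX : C a * X * C b = X := by
    rw [mul_comm (C a) X, mul_assoc, ← C_mul, h, C_1, mul_one]
  rw [mul_sub, sub_mul, hX, ← C_mul, ← C_mul]

lemma rootMultiplicity_comp_linear (f : Polynomial ℂ) (hf : f ≠ 0) (a x : ℂ) (ha : a ≠ 0) :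
    (f.comp (C a⁻¹ * X)).rootMultiplicity (a * x) = f.rootMultiplicity x := by
  obtain ⟨g, hfg, hgnd⟩ := f.exists_eq_pow_rootMultiplicity_mul_and_not_dvd hf x
  have hgx : g.eval x ≠ 0 := fun h => hgnd (dvd_iff_isRoot.2 h)
  have hgcomp : (g.comp (C a⁻¹ * X)).eval (a * x) = g.eval x := by
    rw [eval_comp]
    simp [inv_mul_cancel_left₀ ha]
  have hgc0 : g.comp (C a⁻¹ * X) ≠ 0 := fun h => by
    rw [h] at hgcomp; simp at hgcomp; exact hgx hgcomp.symm
  have hXc : (X - C x).comp (C a⁻¹ * X) = C a⁻¹ * (X - C (a * x)) := by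
    rw [sub_comp, X_comp, C_comp, mul_sub, ← C_mul, inv_mul_cancel_left₀ ha]
  conv_lhs => rw [hfg]
  rw [mul_comp, pow_comp, hXc, mul_pow, ← C_pow]
  rw [rootMultiplicity_mul (by
    refine mul_ne_zero (mul_ne_zero ?_ ?_) hgc0
    · exact C_ne_zero.2 (pow_ne_zero _ (inv_ne_zero ha))
    · exact pow_ne_zero _ (X_sub_C_ne_zero _))]
  rw [rootMultiplicity_mul (mul_ne_zero
    (C_ne_zero.2 (pow_ne_zero _ (inv_ne_zero ha)))
    (pow_ne_zero _ (X_sub_C_ne_zero _)))]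
  rw [rootMultiplicity_C, rootMultiplicity_X_sub_C_pow,
    rootMultiplicity_eq_zero (fun h => hgx (hgcomp.symm.trans h)), zero_add, add_zero]

/-- Let `M` be an `n×n` complex matrix whose underlying directed graph (arc from `i` to `j`
whenever `M i j ≠ 0`) is strongly connected with period `p` (the gcd of all lengths of directed
cycles). Then for every non-zero `lam : ℂ` and every `p`-th root of unity `ζ`, the algebraic
multiplicity of `lam` as an eigenvalue of `M` equals that of `ζ * lam`. -/
theorem stmt0 {n : ℕ} (M : Matrix (Fin n) (Fin n) ℂ) (p : ℕ) (hp : 0 < p)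
    (R : Fin n → Fin n → Prop) (hR : ∀ i j, R i j ↔ M i j ≠ 0)
    (hconn : ∀ i j, ∃ l, HasWalk R i j l)
    (hdvd : ∀ i l, 0 < l → HasWalk R i i l → p ∣ l)
    (hgcd : ∀ d : ℕ, (∀ i l, 0 < l → HasWalk R i i l → d ∣ l) → d ∣ p)
    (lam : ℂ) (hlam : lam ≠ 0) (ζ : ℂ) (hζ : ζ ^ p = 1) :
    Polynomial.rootMultiplicity lam M.charpoly
      = Polynomial.rootMultiplicity (ζ * lam) M.charpoly := by
  classical
  have hζ0 : ζ ≠ 0 := by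
    intro h
    rw [h, zero_pow hp.ne'] at hζ
    exact zero_ne_one hζ
  have hmod : ∀ i l, HasWalk R i i l → p ∣ l := by
    intro i l hw
    rcases Nat.eq_zero_or_pos l with h | h
    · simp [h]
    · exact hdvd i l h hw
  -- a grading function
  obtain ⟨φ, hφ⟩ : ∃ φ : Fin n → ℕ, ∀ i j, M i j ≠ 0 → ζ ^ φ i * ζ = ζ ^ φ j := by
    rcases Nat.eq_zero_or_pos n with hn | hn
    · subst hn
      exact ⟨Fin.elim0, fun i => i.elim0⟩
    · set i0 : Fin n := ⟨0, hn⟩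
      choose φ hφw using fun i => hconn i0 i
      refine ⟨φ, fun i j hMij => ?_⟩
      obtain ⟨m, hm⟩ := hconn j i0
      have d1 : p ∣ φ j + m := hmod _ _ (hasWalk_trans (hφw j) hm)
      have d2 : p ∣ (φ i + 1) + m := hmod _ _
        (hasWalk_trans (hasWalk_trans (hφw i) (hasWalk_single ((hR i j).2 hMij))) hm)
      have e1 : (φ i + 1 + m) ≡ (φ j + m) [MOD p] :=
        ((Nat.modEq_zero_iff_dvd).2 d2).trans ((Nat.modEq_zero_iff_dvd).2 d1).symm
      have e2 : (φ i + 1) ≡ φ j [MOD p] := e1.add_right_cancel' m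
      rw [← pow_succ ζ (φ i)]
      exact pow_eq_of_modEq hζ e2
  have hsc : ∀ i j, ζ * M i j = (ζ ^ φ i)⁻¹ * M i j * ζ ^ φ j := by
    intro i j
    by_cases hM : M i j = 0
    · simp [hM]
    · rw [← hφ i j hM]
      have hne : (ζ : ℂ) ^ φ i ≠ 0 := pow_ne_zero _ hζ0
      field_simp
  have hchne : M.charpoly ≠ 0 := (Matrix.charpoly_monic M).ne_zero
  -- similarity: charpoly (ζ • M) = charpoly M
  have key1 : (ζ • M).charpoly = M.charpoly := by
    have hmat : charmatrix (ζ • M) =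
        Matrix.diagonal (fun i => C ((ζ ^ φ i)⁻¹)) * charmatrix M
          * Matrix.diagonal (fun i => C (ζ ^ φ i)) := by
      ext i j
      rw [Matrix.mul_diagonal, Matrix.diagonal_mul]
      by_cases hij : i = j
      · subst hij
        rw [charmatrix_apply_eq, charmatrix_apply_eq, Matrix.smul_apply, smul_eq_mul,
          hsc i i, conj_entry _ _ _ (inv_mul_cancel₀ (pow_ne_zero _ hζ0))]
      · rw [charmatrix_apply_ne _ _ _ hij, charmatrix_apply_ne _ _ _ hij, Matrix.smul_apply,
          smul_eq_mul, hsc i j, C_mul, C_mul]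
        ring
    rw [Matrix.charpoly, Matrix.charpoly, hmat, Matrix.det_mul, Matrix.det_mul,
      Matrix.det_diagonal, Matrix.det_diagonal, mul_right_comm, ← Finset.prod_mul_distrib]
    have hone : ∀ i : Fin n, C ((ζ ^ φ i)⁻¹) * C (ζ ^ φ i) = 1 := by
      intro i
      rw [← C_mul, inv_mul_cancel₀ (pow_ne_zero _ hζ0), C_1]
    rw [Finset.prod_congr rfl fun i _ => hone i, Finset.prod_const_one, one_mul]
  -- scaling: charpoly M composed with ζ⁻¹ X
  have key2 : M.charpoly.comp (C ζ⁻¹ * X) = C ζ⁻¹ ^ n * (ζ • M).charpoly := by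
    have h1 : M.charpoly.comp (C ζ⁻¹ * X)
        = ((charmatrix M).map (aeval (C ζ⁻¹ * X) : Polynomial ℂ →ₐ[ℂ] Polynomial ℂ)).det := by
      rw [comp_eq_aeval, Matrix.charpoly, AlgHom.map_det]
      rfl
    have h2 : (charmatrix M).map ((aeval (C ζ⁻¹ * X) : Polynomial ℂ →ₐ[ℂ] Polynomial ℂ) : Polynomial ℂ → Polynomial ℂ)
        = C ζ⁻¹ • charmatrix (ζ • M) := by
      ext i j
      rw [Matrix.map_apply, Matrix.smul_apply]
      by_cases hij : i = j
      · subst hij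
        simp only [charmatrix_apply_eq, Matrix.smul_apply, smul_eq_mul, map_sub, aeval_X,
          aeval_C, Polynomial.algebraMap_eq]
        rw [mul_sub, ← C_mul, inv_mul_cancel_left₀ hζ0]
      · simp only [charmatrix_apply_ne _ _ _ hij, Matrix.smul_apply, smul_eq_mul, map_neg,
          aeval_C, Polynomial.algebraMap_eq]
        rw [mul_neg, ← C_mul, inv_mul_cancel_left₀ hζ0]
    rw [h1, h2, Matrix.det_smul, Matrix.charpoly]
    simp
  have hchne2 : (ζ • M).charpoly ≠ 0 := (Matrix.charpoly_monic _).ne_zero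
  calc Polynomial.rootMultiplicity lam M.charpoly
      = (M.charpoly.comp (C ζ⁻¹ * X)).rootMultiplicity (ζ * lam) :=
        (rootMultiplicity_comp_linear _ hchne ζ lam hζ0).symm
    _ = Polynomial.rootMultiplicity (ζ * lam) (C ζ⁻¹ ^ n * (ζ • M).charpoly) := by rw [key2]
    _ = Polynomial.rootMultiplicity (ζ * lam) ((ζ • M).charpoly) := by
        rw [← C_pow, rootMultiplicity_mul
          (mul_ne_zero (C_ne_zero.2 (pow_ne_zero _ (inv_ne_zero hζ0))) hchne2),
          rootMultiplicity_C, zero_add]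
    _ = Polynomial.rootMultiplicity (ζ * lam) M.charpoly := by rw [key1]
end

section
/- Let M be an n×n complex matrix whose underlying directed graph is strongly connected with period p, so that after reordering indices M is a block cyclic matrix with blocks A_1,…,A_p. If h(x) is the characteristic polynomial of the product A_1·A_2 ⋯ A_p (an m×m matrix), then the characteristic polynomial of M equals x^{n - pm}·h(x^p). -/
open Polynomial Matrix Finset

lemma det_blockTri_fst {R : Type*} [CommRing R] {p m : ℕ}
    (N : Matrix (Fin p × Fin m) (Fin p × Fin m) R)
    (h : ∀ (i j : Fin p) (a b : Fin m), j < i → N (i, a) (j, b) = 0) :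
    N.det = ∏ i : Fin p, Matrix.det (Matrix.of fun a b => N (i, a) (i, b)) := by
  rcases Nat.eq_zero_or_pos m with hm | hm
  · subst hm
    have : IsEmpty (Fin p × Fin 0) := by infer_instance
    rw [Matrix.det_isEmpty]
    have : ∀ i : Fin p, Matrix.det (Matrix.of fun a b => N (i, a) (i, b)) = 1 := by
      intro i; exact Matrix.det_isEmpty
    simp [this]
  · have hbt : N.BlockTriangular Prod.fst := by
      rintro ⟨i, a⟩ ⟨j, b⟩ hij
      exact h i j a b hij
    rw [hbt.det]
    have himg : (Finset.univ : Finset (Fin p × Fin m)).image Prod.fst = Finset.univ := by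
      ext i
      simp only [Finset.mem_image, Finset.mem_univ, iff_true]
      exact ⟨(i, ⟨0, hm⟩), trivial, rfl⟩
    rw [himg]
    refine Finset.prod_congr rfl fun i _ => ?_
    let e : Fin m ≃ { q : Fin p × Fin m // q.1 = i } :=
      { toFun := fun a => ⟨(i, a), rfl⟩
        invFun := fun q => q.1.2
        left_inv := fun a => rfl
        right_inv := fun q => by
          obtain ⟨⟨j, a⟩, hj⟩ := q
          simp only at hj
          subst hj
          rfl }
    rw [← Matrix.det_submatrix_equiv_self e]
    have : (N.toSquareBlock Prod.fst i).submatrix e e = Matrix.of fun a b => N (i, a) (i, b) := by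
      ext a b
      simp [Matrix.toSquareBlock_def, e]
    rw [this]

lemma det_blockTri_fst' {R : Type*} [CommRing R] {p m : ℕ}
    (N : Matrix (Fin p × Fin m) (Fin p × Fin m) R)
    (h : ∀ (i j : Fin p) (a b : Fin m), i < j → N (i, a) (j, b) = 0) :
    N.det = ∏ i : Fin p, Matrix.det (Matrix.of fun a b => N (i, a) (i, b)) := by
  rw [← Matrix.det_transpose]
  rw [det_blockTri_fst Nᵀ (fun i j a b hij => h j i b a hij)]
  refine Finset.prod_congr rfl fun i _ => ?_
  rw [← Matrix.det_transpose]
  rfl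

noncomputable def ppr {p m : ℕ} (A : Fin p → Matrix (Fin m) (Fin m) ℂ) (i j : ℕ) :
    Matrix (Fin m) (Fin m) ℂ :=
  (((List.ofFn A).drop (i + 1)).take (j - i)).prod

lemma ppr_self {p m : ℕ} (A : Fin p → Matrix (Fin m) (Fin m) ℂ) (i : ℕ) :
    ppr A i i = 1 := by
  simp [ppr]

lemma ppr_succ {p m : ℕ} (A : Fin p → Matrix (Fin m) (Fin m) ℂ) {i j : ℕ}
    (hij : i < j) (hj : j < p) :
    ppr A i j = A ⟨i + 1, by omega⟩ * ppr A (i + 1) j := by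
  unfold ppr
  have hlen : i + 1 < (List.ofFn A).length := by simp; omega
  rw [List.drop_eq_getElem_cons hlen]
  have : j - i = (j - (i + 1)) + 1 := by omega
  rw [this, List.take_succ_cons, List.prod_cons]
  congr 1
  simp

lemma prod_ofFn_eq {p m : ℕ} [NeZero p] (A : Fin p → Matrix (Fin m) (Fin m) ℂ) :
    (List.ofFn A).prod = A 0 * ppr A 0 (p - 1) := by
  obtain ⟨n, rfl⟩ := Nat.exists_eq_succ_of_ne_zero (NeZero.ne p)
  rw [List.ofFn_succ, List.prod_cons]
  congr 1
  unfold ppr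
  rw [List.ofFn_succ, List.drop_one, List.tail_cons]
  simp only [Nat.succ_sub_one, Nat.sub_zero]
  rw [List.take_of_length_le (by simp)]

noncomputable def Vmat {p m : ℕ} (A : Fin p → Matrix (Fin m) (Fin m) ℂ) :
    Matrix (Fin p × Fin m) (Fin p × Fin m) ℂ[X] :=
  Matrix.of fun q r =>
    if (q.1 : ℕ) ≤ (r.1 : ℕ) then
      X ^ (p - 1 - ((r.1 : ℕ) - (q.1 : ℕ))) * C (ppr A q.1 r.1 q.2 r.2)
    else 0

noncomputable def Wmat {p m : ℕ} [NeZero p] (A : Fin p → Matrix (Fin m) (Fin m) ℂ) :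
    Matrix (Fin p × Fin m) (Fin p × Fin m) ℂ[X] :=
  Matrix.of fun q r =>
    if q.1 = r.1 then
      (if (q.1 : ℕ) = p - 1 then
          (X ^ p : ℂ[X]) • (1 : Matrix (Fin m) (Fin m) ℂ[X]) - (A 0 * ppr A 0 (p - 1)).map C
        else (X ^ p : ℂ[X]) • (1 : Matrix (Fin m) (Fin m) ℂ[X])) q.2 r.2
    else if (q.1 : ℕ) = p - 1 then
      -(X ^ (p - 1 - (r.1 : ℕ)) * C ((A 0 * ppr A 0 (r.1 : ℕ)) q.2 r.2))
    else 0

lemma mul_entry {p m : ℕ} [NeZero p] (A : Fin p → Matrix (Fin m) (Fin m) ℂ)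
    (M : Matrix (Fin p × Fin m) (Fin p × Fin m) ℂ)
    (hM : ∀ (i j : Fin p) (a b : Fin m),
      M (i, a) (j, b) = if j = i + 1 then A j a b else 0)
    (i j : Fin p) (a b : Fin m) :
    (charmatrix M * Vmat A) (i, a) (j, b) =
      X * Vmat A (i, a) (j, b)
        - ∑ c : Fin m, C (A (i + 1) a c) * Vmat A (i + 1, c) (j, b) := by
  have hcm : ∀ q s : Fin p × Fin m,
      charmatrix M q s = (if q = s then X else 0) - C (M q s) := by
    intro q s
    rcases eq_or_ne q s with rfl | hqs
    · simp [charmatrix_apply_eq]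
    · simp [charmatrix_apply_ne _ _ _ hqs, hqs]
  rw [Matrix.mul_apply]
  simp only [hcm, sub_mul]
  rw [Finset.sum_sub_distrib]
  congr 1
  · simp only [ite_mul, zero_mul]
    rw [Finset.sum_ite_eq Finset.univ ((i, a) : Fin p × Fin m)
      (fun s => X * Vmat A s (j, b))]
    simp
  · rw [Fintype.sum_prod_type]
    have : ∀ (k : Fin p) (c : Fin m),
        C (M (i, a) (k, c)) * Vmat A (k, c) (j, b) =
          if k = i + 1 then C (A k a c) * Vmat A (k, c) (j, b) else 0 := by
      intro k c
      rw [hM]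
      split <;> simp
    simp only [this, Finset.sum_ite_irrel, Finset.sum_const_zero]
    rw [Finset.sum_ite_eq' Finset.univ (i + 1)
      (fun k => ∑ c : Fin m, C (A k a c) * Vmat A (k, c) (j, b))]
    simp

lemma sum_CAC {m : ℕ} (B D : Matrix (Fin m) (Fin m) ℂ) (a b : Fin m) (e : ℕ) :
    ∑ c : Fin m, C (B a c) * (X ^ e * C (D c b)) = X ^ e * C ((B * D) a b) := by
  rw [Matrix.mul_apply, map_sum, Finset.mul_sum]
  refine Finset.sum_congr rfl fun c _ => ?_
  rw [C_mul]
  ring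

lemma fin_add_one_val {p : ℕ} [NeZero p] (i : Fin p) :
    ((i + 1 : Fin p) : ℕ) = ((i : ℕ) + 1) % p := by
  rw [Fin.add_def, Fin.val_one']
  conv_rhs => rw [Nat.add_mod, Nat.mod_eq_of_lt i.isLt]

lemma key {p m : ℕ} [NeZero p] (A : Fin p → Matrix (Fin m) (Fin m) ℂ)
    (M : Matrix (Fin p × Fin m) (Fin p × Fin m) ℂ)
    (hM : ∀ (i j : Fin p) (a b : Fin m),
      M (i, a) (j, b) = if j = i + 1 then A j a b else 0) :
    charmatrix M * Vmat A = Wmat A := by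
  refine Matrix.ext fun q r => ?_
  obtain ⟨i, a⟩ := q
  obtain ⟨j, b⟩ := r
  rw [mul_entry A M hM]
  have hip : (i : ℕ) < p := i.isLt
  have hjp : (j : ℕ) < p := j.isLt
  have hcase : (i : ℕ) < p - 1 ∨ (i : ℕ) = p - 1 := by omega
  rcases hcase with hi | hi
  · -- i is not the last block row
    have hv1 : ((i + 1 : Fin p) : ℕ) = (i : ℕ) + 1 := by
      rw [fin_add_one_val, Nat.mod_eq_of_lt (by omega)]
    rcases lt_trichotomy ((j : ℕ)) ((i : ℕ)) with h | h | h
    · -- j < i : everything vanishes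
      have h1 : ¬((i : ℕ) ≤ (j : ℕ)) := by omega
      have h2 : ¬((i : ℕ) + 1 ≤ (j : ℕ)) := by omega
      have hij : ¬(i = j) := fun hc => by rw [hc] at h; omega
      have hip1 : ¬((i : ℕ) = p - 1) := by omega
      simp only [Vmat, Wmat, Matrix.of_apply, hv1, h1, h2, hij, hip1, if_false,
        mul_zero, Finset.sum_const_zero, sub_zero, ite_false]
    · -- j = i : diagonal block
      have hij : j = i := Fin.ext h
      subst hij
      have h2 : ¬((j : ℕ) + 1 ≤ (j : ℕ)) := by omega
      have hip1 : ¬((j : ℕ) = p - 1) := by omega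
      simp only [Vmat, Wmat, Matrix.of_apply, hv1, le_refl, h2, hip1, ite_true,
        ite_false, mul_zero, Finset.sum_const_zero, sub_zero, Nat.sub_self,
        Nat.sub_zero, ppr_self, Matrix.smul_apply, smul_eq_mul]
      by_cases hab : a = b
      · subst hab
        rw [Matrix.one_apply_eq, Matrix.one_apply_eq, C_1, mul_one, mul_one,
          ← pow_succ']
        congr 1
        omega
      · rw [Matrix.one_apply_ne hab, Matrix.one_apply_ne hab, C_0, mul_zero,
          mul_zero, mul_zero]
    · -- i < j : telescoping, entry is zero
      have h1 : ((i : ℕ) ≤ (j : ℕ)) := by omega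
      have h2 : ((i : ℕ) + 1 ≤ (j : ℕ)) := h
      have hij : ¬(i = j) := fun hc => by rw [hc] at h; omega
      have hip1 : ¬((i : ℕ) = p - 1) := by omega
      simp only [Vmat, Wmat, Matrix.of_apply, hv1, h1, h2, hij, hip1, ite_true,
        ite_false]
      rw [sum_CAC]
      have hA : (i + 1 : Fin p) = ⟨(i : ℕ) + 1, by omega⟩ := Fin.ext hv1
      rw [hA, ← ppr_succ A h hjp]
      rw [← mul_assoc, ← pow_succ']
      rw [show (p - 1 - ((j : ℕ) - (i : ℕ))) + 1 = p - 1 - ((j : ℕ) - ((i : ℕ) + 1))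
        from by omega]
      exact sub_self _
  · -- i = p - 1 : last block row
    have hv0 : (i + 1 : Fin p) = 0 := by
      refine Fin.ext ?_
      rw [fin_add_one_val]
      have hp : (i : ℕ) + 1 = p := by omega
      rw [hp, Nat.mod_self, Fin.val_zero]
    rcases eq_or_lt_of_le (show (j : ℕ) ≤ p - 1 by omega) with hj | hj
    · -- j = p - 1, i.e. j = i
      have hij : j = i := Fin.ext (by omega)
      subst hij
      simp only [Vmat, Wmat, Matrix.of_apply, hv0, hi, le_refl, ite_true,
        Fin.val_zero, Nat.sub_zero, Nat.sub_self, Nat.zero_le, pow_zero,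
        Matrix.sub_apply, Matrix.smul_apply, Matrix.map_apply, smul_eq_mul,
        ppr_self]
      simp only [one_mul, ← C_mul, ← map_sum, ← Matrix.mul_apply]
      by_cases hab : a = b
      · subst hab
        rw [Matrix.one_apply_eq, Matrix.one_apply_eq, C_1, mul_one, mul_one,
          ← pow_succ']
        congr 2
        omega
      · simp [Matrix.one_apply_ne hab]
    · -- j < p - 1
      have h1 : ¬((i : ℕ) ≤ (j : ℕ)) := by omega
      have h1' : ¬(p - 1 ≤ (j : ℕ)) := by omega
      have hij : ¬(i = j) := fun hc => by rw [hc] at hi; omega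
      simp only [Vmat, Wmat, Matrix.of_apply, hv0, hi, h1, h1', hij, ite_true, ite_false,
        Fin.val_zero, Nat.sub_zero, Nat.zero_le, mul_zero, zero_sub]
      rw [sum_CAC]

lemma det_Vmat {p m : ℕ} [NeZero p] (A : Fin p → Matrix (Fin m) (Fin m) ℂ) :
    (Vmat A).det = X ^ ((p - 1) * m * p) := by
  rw [det_blockTri_fst (Vmat A) (fun i j a b h => by
    simp only [Vmat, Matrix.of_apply]
    rw [if_neg (by exact_mod_cast not_le_of_gt h)])]
  have hdiag : ∀ i : Fin p,
      (Matrix.of fun a b => Vmat A (i, a) (i, b)) =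
        (X ^ (p - 1) : ℂ[X]) • (1 : Matrix (Fin m) (Fin m) ℂ[X]) := by
    intro i
    refine Matrix.ext fun a b => ?_
    simp only [Vmat, Matrix.of_apply, le_refl, ite_true, Nat.sub_self, Nat.sub_zero,
      ppr_self, Matrix.smul_apply, smul_eq_mul]
    by_cases hab : a = b
    · subst hab; rw [Matrix.one_apply_eq, Matrix.one_apply_eq, C_1]
    · simp [Matrix.one_apply_ne hab]
  simp only [hdiag]
  rw [Finset.prod_const]
  rw [Matrix.det_smul, Matrix.det_one, mul_one, Fintype.card_fin, Finset.card_univ,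
    Fintype.card_fin, ← pow_mul, ← pow_mul]
  ring_nf

lemma det_Wmat {p m : ℕ} [NeZero p] (A : Fin p → Matrix (Fin m) (Fin m) ℂ) :
    (Wmat A).det = X ^ (p * m * (p - 1)) *
      ((X ^ p : ℂ[X]) • (1 : Matrix (Fin m) (Fin m) ℂ[X])
        - (A 0 * ppr A 0 (p - 1)).map C).det := by
  rw [det_blockTri_fst' (Wmat A) (fun i j a b h => by
    have h1 : ¬(i = j) := ne_of_lt h
    have h2 : ¬((i : ℕ) = p - 1) := by
      have := j.isLt
      have : (i : ℕ) < (j : ℕ) := h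
      omega
    simp [Wmat, h1, h2])]
  have hlast : (⟨p - 1, by have := NeZero.pos p; omega⟩ : Fin p) ∈ Finset.univ :=
    Finset.mem_univ _
  rw [← Finset.prod_erase_mul _ _ hlast]
  have hd1 : (Matrix.of fun a b =>
      Wmat A ((⟨p - 1, by have := NeZero.pos p; omega⟩ : Fin p), a)
        ((⟨p - 1, by have := NeZero.pos p; omega⟩ : Fin p), b)) =
      (X ^ p : ℂ[X]) • (1 : Matrix (Fin m) (Fin m) ℂ[X])
        - (A 0 * ppr A 0 (p - 1)).map C := by
    ext a b
    simp [Wmat]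
  rw [hd1]
  congr 1
  have hother : ∀ i ∈ Finset.univ.erase (⟨p - 1, by have := NeZero.pos p; omega⟩ : Fin p),
      (Matrix.of fun a b => Wmat A (i, a) (i, b)).det = (X ^ p : ℂ[X]) ^ m := by
    intro i hi
    have hne : (i : ℕ) ≠ p - 1 := by
      intro hc
      exact (Finset.ne_of_mem_erase hi) (Fin.ext hc)
    have : (Matrix.of fun a b => Wmat A (i, a) (i, b)) =
        (X ^ p : ℂ[X]) • (1 : Matrix (Fin m) (Fin m) ℂ[X]) := by
      ext a b
      simp [Wmat, hne]
    rw [this, Matrix.det_smul, Matrix.det_one, mul_one, Fintype.card_fin]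
  rw [Finset.prod_congr rfl hother, Finset.prod_const, Finset.card_erase_of_mem hlast,
    Finset.card_univ, Fintype.card_fin, ← pow_mul, ← pow_mul]
  ring_nf

lemma comp_Xpow {m : ℕ} (P : Matrix (Fin m) (Fin m) ℂ) (p : ℕ) :
    (Matrix.charpoly P).comp (X ^ p) =
      ((X ^ p : ℂ[X]) • (1 : Matrix (Fin m) (Fin m) ℂ[X]) - P.map C).det := by
  let φ : ℂ[X] →+* ℂ[X] := Polynomial.eval₂RingHom Polynomial.C (X ^ p : ℂ[X])
  have hφ : ∀ q : ℂ[X], q.comp (X ^ p) = φ q := fun q => rfl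
  rw [Matrix.charpoly, hφ, RingHom.map_det]
  congr 1
  refine Matrix.ext fun i j => ?_
  by_cases hij : i = j
  · subst hij
    simp only [RingHom.mapMatrix_apply, Matrix.map_apply, charmatrix_apply_eq,
      map_sub, Matrix.sub_apply, Matrix.smul_apply, smul_eq_mul]
    rw [show φ X = X ^ p from eval₂_X _ _, show ∀ c, φ (C c) = C c from fun c => eval₂_C _ _]
    rw [Matrix.one_apply_eq, mul_one]
  · simp only [RingHom.mapMatrix_apply, Matrix.map_apply, charmatrix_apply_ne _ _ _ hij,
      map_neg, Matrix.sub_apply, Matrix.smul_apply, smul_eq_mul]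
    rw [show ∀ c, φ (C c) = C c from fun c => eval₂_C _ _]
    rw [Matrix.one_apply_ne hij, mul_zero, zero_sub]

/-- Let `M` be the block cyclic matrix (of total size `n = p·m`) with blocks
`A 1, …, A (p-1)` on the block superdiagonal and `A 0` in the lower-left corner,
i.e. block row `i` maps to block column `i+1 (mod p)` via `A (i+1)`.
If `h` is the characteristic polynomial of the `m×m` product `A 0 · A 1 ⋯ A (p-1)`,
then the characteristic polynomial of `M` is `X^(n - p·m) · h(X^p)`. -/
theorem stmt1 (p m : ℕ) [NeZero p]
    (A : Fin p → Matrix (Fin m) (Fin m) ℂ)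
    (M : Matrix (Fin p × Fin m) (Fin p × Fin m) ℂ)
    (hM : ∀ (i j : Fin p) (a b : Fin m),
      M (i, a) (j, b) = if j = i + 1 then A j a b else 0) :
    M.charpoly =
      Polynomial.X ^ (Fintype.card (Fin p × Fin m) - p * m) *
        (Matrix.charpoly (List.ofFn fun i : Fin p => A i).prod).comp
          (Polynomial.X ^ p) := by
  have hcard : Fintype.card (Fin p × Fin m) - p * m = 0 := by
    simp [Fintype.card_prod]
  rw [hcard, pow_zero, one_mul]
  have hofn : (List.ofFn fun i : Fin p => A i) = List.ofFn A := rfl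
  rw [hofn, prod_ofFn_eq A, comp_Xpow]
  have hdet : M.charpoly * (Vmat A).det = (Wmat A).det := by
    rw [Matrix.charpoly, ← Matrix.det_mul, key A M hM]
  rw [det_Vmat, det_Wmat] at hdet
  have hexp : p * m * (p - 1) = (p - 1) * m * p := by ring
  rw [hexp] at hdet
  have hX : (X : ℂ[X]) ^ ((p - 1) * m * p) ≠ 0 :=
    pow_ne_zero _ Polynomial.X_ne_zero
  exact mul_right_cancel₀ hX (hdet.trans (mul_comm _ _))
end

section
/- Let q ≥ 2 and let s_q(n) denote the q-ary sum of digits of n. The Dirichlet series D(z) = Σ_{m≥1} (s_q(m) − s_q(m−1)) m^{−z}, absolutely convergent for Re z > 1, satisfies the closed form D(z) = ((1 − q^{1−z})/(1 − q^{−z})) · ζ(z), where ζ denotes the Riemann zeta function. -/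
private lemma sum_digits_eq (q : ℕ) (hq : 2 ≤ q) (n : ℕ) :
    (Nat.digits q n).sum = n % q + (Nat.digits q (n / q)).sum := by
  rcases Nat.eq_zero_or_pos n with h | h
  · simp [h]
  · rw [Nat.digits_def' (by omega : 1 < q) h, List.sum_cons]

private lemma delta_eq (q : ℕ) (hq : 2 ≤ q) : ∀ n : ℕ,
    ((Nat.digits q (n + 1)).sum : ℤ) - ((Nat.digits q n).sum : ℤ)
      = 1 - ((q : ℤ) - 1) * (Nat.maxPowDiv q (n + 1)) := by
  intro n
  induction n using Nat.strong_induction_on with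
  | _ n ih =>
    by_cases hdvd : q ∣ (n + 1)
    · obtain ⟨M, hM⟩ := hdvd
      have hM1 : 1 ≤ M := by
        rcases Nat.eq_zero_or_pos M with h | h
        · rw [h, Nat.mul_zero] at hM; omega
        · exact h
      obtain ⟨M', rfl⟩ : ∃ M', M = M' + 1 := ⟨M - 1, by omega⟩
      rw [Nat.mul_add, Nat.mul_one] at hM
      have hn : n = (q - 1) + q * M' := by omega
      have hv : Nat.maxPowDiv q (n + 1) = Nat.maxPowDiv q (M' + 1) + 1 := by
        have : n + 1 = q * (M' + 1) := by rw [Nat.mul_add, Nat.mul_one]; omega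
        rw [this]
        exact Nat.maxPowDiv.base_mul_eq_succ (by omega) (by omega)
      have h1 : (Nat.digits q (n + 1)).sum = (Nat.digits q (M' + 1)).sum := by
        rw [sum_digits_eq q hq (n + 1)]
        have e1 : n + 1 = 0 + q * (M' + 1) := by rw [Nat.mul_add, Nat.mul_one]; omega
        rw [e1, Nat.add_mul_mod_self_left, Nat.add_mul_div_left _ _ (by omega : 0 < q)]
        simp
      have h2 : (Nat.digits q n).sum = (q - 1) + (Nat.digits q M').sum := by
        rw [sum_digits_eq q hq n, hn, Nat.add_mul_mod_self_left,
          Nat.add_mul_div_left _ _ (by omega : 0 < q),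
          Nat.mod_eq_of_lt (by omega), Nat.div_eq_of_lt (by omega), Nat.zero_add]
      have hM'n : M' < n := by
        have : 2 * M' ≤ q * M' := Nat.mul_le_mul_right M' hq
        omega
      have ihM := ih M' hM'n
      rw [h1, h2, hv]
      push_cast [Nat.cast_sub (by omega : 1 ≤ q)] at ihM ⊢
      linarith [ihM]
    · have hv : Nat.maxPowDiv q (n + 1) = 0 := by
        by_contra h
        exact hdvd (dvd_trans (dvd_pow_self q h) (@Nat.maxPowDiv.pow_dvd q (n + 1)))
      have hr : (n + 1) % q ≠ 0 := fun h => hdvd (Nat.dvd_of_mod_eq_zero h)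
      have hdm := Nat.div_add_mod (n + 1) q
      set c := (n + 1) / q with hc
      set r := (n + 1) % q with hrdef
      have hrq : r < q := Nat.mod_lt _ (by omega)
      have hn : n = (r - 1) + q * c := by omega
      have h1 : (Nat.digits q (n + 1)).sum = r + (Nat.digits q c).sum := by
        rw [sum_digits_eq q hq (n + 1), ← hrdef, ← hc]
      have h2 : (Nat.digits q n).sum = (r - 1) + (Nat.digits q c).sum := by
        rw [sum_digits_eq q hq n, hn, Nat.add_mul_mod_self_left,
          Nat.add_mul_div_left _ _ (by omega : 0 < q),
          Nat.mod_eq_of_lt (by omega), Nat.div_eq_of_lt (by omega), Nat.zero_add]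
      rw [h1, h2, hv]
      push_cast [Nat.cast_sub (by omega : 1 ≤ r)]
      ring

private def fiberEquiv (q : ℕ) (hq : 2 ≤ q) (n : ℕ) :
    {p : ℕ × ℕ // q ^ (p.1 + 1) * (p.2 + 1) = n + 1} ≃ Fin (Nat.maxPowDiv q (n + 1)) where
  toFun p := ⟨p.1.1, by
    have h : p.1.1 + 1 ≤ Nat.maxPowDiv q (n + 1) := (Nat.pow_dvd_iff_le_padicValNat (by omega : q ≠ 1) (by omega : n + 1 ≠ 0)).mp
      ⟨p.1.2 + 1, p.2.symm⟩
    omega⟩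
  invFun k := ⟨(k.1, (n + 1) / q ^ (k.1 + 1) - 1), by
    have hdvd : q ^ (k.1 + 1) ∣ n + 1 :=
      dvd_trans (pow_dvd_pow q k.2) (@Nat.maxPowDiv.pow_dvd q (n + 1))
    have hd := Nat.mul_div_cancel' hdvd
    have hpos : 0 < (n + 1) / q ^ (k.1 + 1) := by
      rcases Nat.eq_zero_or_pos ((n + 1) / q ^ (k.1 + 1)) with h | h
      · rw [h, Nat.mul_zero] at hd; omega
      · exact h
    simpa [Nat.sub_add_cancel hpos] using hd⟩
  left_inv p := by
    obtain ⟨⟨k, m⟩, hp⟩ := p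
    apply Subtype.ext
    have : (n + 1) / q ^ (k + 1) = m + 1 := by
      rw [← hp, Nat.mul_div_cancel_left _ (Nat.pow_pos (by omega))]
    simp [this]
  right_inv k := rfl

/-- Let `q ≥ 2` and let `s_q(n) = (Nat.digits q n).sum` be the `q`-ary sum of digits.
The Dirichlet series `D(z) = Σ_{m≥1} (s_q(m) − s_q(m−1)) m^{−z}`, absolutely convergent for
`Re z > 1`, satisfies `D(z) = ((1 − q^{1−z})/(1 − q^{−z})) ζ(z)`. -/
theorem stmt5 (q : ℕ) (hq : 2 ≤ q) (z : ℂ) (hz : 1 < z.re) :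
    Summable (fun m : ℕ =>
      ‖(((Nat.digits q (m + 1)).sum : ℂ) - ((Nat.digits q m).sum : ℂ)) *
        ((m : ℂ) + 1) ^ (-z)‖) ∧
    ∑' m : ℕ, (((Nat.digits q (m + 1)).sum : ℂ) - ((Nat.digits q m).sum : ℂ)) *
        ((m : ℂ) + 1) ^ (-z)
      = ((1 - (q : ℂ) ^ ((1 : ℂ) - z)) / (1 - (q : ℂ) ^ (-z))) * riemannZeta z := by
  set r : ℂ := (q : ℂ) ^ (-z) with hr
  have hnr : ‖r‖ < 1 := by
    rw [hr, Complex.norm_natCast_cpow_of_pos (by omega) (-z)]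
    apply Real.rpow_lt_one_of_one_lt_of_neg
    · exact_mod_cast (by omega : 1 < q)
    · rw [Complex.neg_re]; linarith
  have h1r : (1 : ℂ) - r ≠ 0 := by
    intro h
    have hre : r = 1 := by linear_combination -h
    rw [hre] at hnr; simp at hnr
  set c : ℕ → ℂ := fun m => ((m : ℂ) + 1) ^ (-z) with hcdef
  have hc_cast : ∀ m : ℕ, c m = (((m + 1 : ℕ)) : ℂ) ^ (-z) := by
    intro m; rw [hcdef]; push_cast; rfl
  have hc_sum : Summable c := by
    have h0 : Summable (fun n : ℕ => 1 / (n : ℂ) ^ z) :=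
      Complex.summable_one_div_nat_cpow.mpr hz
    have h1 := h0.comp_injective (add_left_injective 1)
    refine h1.congr fun m => ?_
    simp only [Function.comp]
    rw [hc_cast m, Complex.cpow_neg, one_div]
  have hZ : ∑' m, c m = riemannZeta z := by
    rw [zeta_eq_tsum_one_div_nat_add_one_cpow hz]
    refine (tsum_congr fun m => ?_).symm
    rw [hcdef]; simp only []
    rw [Complex.cpow_neg, one_div]
  have hc_norm : Summable (fun m => ‖c m‖) := by
    have h0 : Summable (fun n : ℕ => 1 / (n : ℝ) ^ z.re) :=
      Real.summable_one_div_nat_rpow.mpr hz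
    have h1 := h0.comp_injective (add_left_injective 1)
    refine h1.congr fun m => ?_
    simp only [Function.comp]
    rw [hc_cast m, Complex.norm_natCast_cpow_of_pos (by omega), Complex.neg_re,
      Real.rpow_neg (by positivity), one_div]
  have hpow_cast : ∀ k : ℕ, ((q ^ k : ℕ) : ℂ) ^ (-z) = r ^ k := by
    intro k
    induction k with
    | zero => simp
    | succ k ihk =>
      rw [pow_succ, Nat.cast_mul, Complex.natCast_mul_natCast_cpow, ihk, pow_succ]
  have hgeo_norm : Summable (fun k : ℕ => ‖r ^ (k + 1)‖) := by
    have h := summable_geometric_of_lt_one (norm_nonneg r) hnr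
    refine (h.mul_left ‖r‖).congr fun k => ?_
    rw [norm_pow, pow_succ']
  have hgeo_sum : ∑' k : ℕ, r ^ (k + 1) = r * (1 - r)⁻¹ := by
    calc ∑' k : ℕ, r ^ (k + 1) = ∑' k : ℕ, r * r ^ k := tsum_congr fun k => pow_succ' r k
      _ = r * ∑' k : ℕ, r ^ k := tsum_mul_left
      _ = r * (1 - r)⁻¹ := by rw [tsum_geometric_of_norm_lt_one hnr]
  set G : ℕ × ℕ → ℂ := fun p => ((q ^ (p.1 + 1) * (p.2 + 1) : ℕ) : ℂ) ^ (-z) with hGdef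
  have hG_eq : ∀ p : ℕ × ℕ, G p = r ^ (p.1 + 1) * c p.2 := by
    rintro ⟨k, m⟩
    rw [hGdef]
    simp only [Nat.cast_mul]
    rw [Complex.natCast_mul_natCast_cpow, hpow_cast, hc_cast]
  have hG_norm : Summable (fun p : ℕ × ℕ => ‖G p‖) := by
    have h := summable_mul_of_summable_norm (R := ℝ)
      (f := fun k : ℕ => ‖r ^ (k + 1)‖) (g := fun m : ℕ => ‖c m‖)
      (hgeo_norm.congr fun k => (norm_norm _).symm)
      (hc_norm.congr fun m => (norm_norm _).symm)
    refine h.congr fun p => ?_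
    rw [hG_eq p, norm_mul]
  have hG_sum : Summable G := hG_norm.of_norm
  have hGsum : ∑' p, G p = r * (1 - r)⁻¹ * riemannZeta z := by
    rw [Summable.tsum_prod hG_sum]
    calc ∑' (k : ℕ) (m : ℕ), G (k, m)
        = ∑' k : ℕ, r ^ (k + 1) * riemannZeta z := by
          refine tsum_congr fun k => ?_
          rw [show (∑' m : ℕ, G (k, m)) = ∑' m : ℕ, r ^ (k + 1) * c m from
            tsum_congr fun m => hG_eq (k, m), tsum_mul_left, hZ]
      _ = (∑' k : ℕ, r ^ (k + 1)) * riemannZeta z := tsum_mul_right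
      _ = r * (1 - r)⁻¹ * riemannZeta z := by rw [hgeo_sum]
  set e : ℕ × ℕ → ℕ := fun p => q ^ (p.1 + 1) * (p.2 + 1) - 1 with he
  have hfib := hG_sum.hasSum.tsum_fiberwise e
  have hfib_eq : ∀ n : ℕ,
      (∑' p : e ⁻¹' {n}, G ↑p) = (Nat.maxPowDiv q (n + 1) : ℂ) * c n := by
    intro n
    have hEsub : (e ⁻¹' {n}) ≃ {p : ℕ × ℕ // q ^ (p.1 + 1) * (p.2 + 1) = n + 1} := by
      apply Equiv.subtypeEquivRight
      intro p
      have hpos : 0 < q ^ (p.1 + 1) * (p.2 + 1) :=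
        Nat.mul_pos (Nat.pow_pos (by omega)) (Nat.succ_pos _)
      simp only [Set.mem_preimage, Set.mem_singleton_iff, he]
      omega
    have hE : (e ⁻¹' {n}) ≃ Fin (Nat.maxPowDiv q (n + 1)) := hEsub.trans (fiberEquiv q hq n)
    have hval : ∀ p : (e ⁻¹' {n}), G ↑p = c n := by
      rintro ⟨⟨k, m⟩, hp⟩
      have hp' : e (k, m) = n := hp
      have hpos : 0 < q ^ (k + 1) * (m + 1) :=
        Nat.mul_pos (Nat.pow_pos (by omega)) (Nat.succ_pos _)
      have heq : q ^ (k + 1) * (m + 1) = n + 1 := by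
        simp only [he] at hp'; omega
      rw [hGdef]
      simp only []
      rw [heq, hc_cast]
    rw [← hE.symm.tsum_eq (fun p : (e ⁻¹' {n}) => G ↑p)]
    calc ∑' i : Fin (Nat.maxPowDiv q (n + 1)), G ↑(hE.symm i)
        = ∑' _i : Fin (Nat.maxPowDiv q (n + 1)), c n := tsum_congr fun i => hval _
      _ = (Nat.maxPowDiv q (n + 1) : ℂ) * c n := by
          rw [tsum_fintype, Finset.sum_const, Finset.card_univ, Fintype.card_fin,
            nsmul_eq_mul]
  have hT : HasSum (fun n : ℕ => (Nat.maxPowDiv q (n + 1) : ℂ) * c n)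
      (r * (1 - r)⁻¹ * riemannZeta z) := by
    rw [← hGsum, ← funext hfib_eq]
    exact hfib
  have hF_eq : (fun m : ℕ =>
      (((Nat.digits q (m + 1)).sum : ℂ) - ((Nat.digits q m).sum : ℂ)) *
        ((m : ℂ) + 1) ^ (-z))
      = fun m : ℕ => c m - ((q : ℂ) - 1) * ((Nat.maxPowDiv q (m + 1) : ℂ) * c m) := by
    funext m
    have hd : (((Nat.digits q (m + 1)).sum : ℂ) - ((Nat.digits q m).sum : ℂ))
        = 1 - ((q : ℂ) - 1) * (Nat.maxPowDiv q (m + 1) : ℂ) := by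
      exact_mod_cast congrArg (fun x : ℤ => (x : ℂ)) (delta_eq q hq m)
    rw [hd, hcdef]
    ring
  have hsummF : Summable (fun m : ℕ =>
      (((Nat.digits q (m + 1)).sum : ℂ) - ((Nat.digits q m).sum : ℂ)) *
        ((m : ℂ) + 1) ^ (-z)) := by
    rw [hF_eq]
    exact hc_sum.sub ((hT.summable).mul_left _)
  constructor
  · exact summable_norm_iff.mpr hsummF
  · rw [hF_eq, Summable.tsum_sub hc_sum ((hT.summable).mul_left _), hZ, tsum_mul_left, hT.tsum_eq]
    have hq1z : (q : ℂ) ^ ((1 : ℂ) - z) = (q : ℂ) * r := by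
      rw [hr, sub_eq_add_neg, Complex.cpow_add _ _ (by exact_mod_cast (by omega : q ≠ 0)),
        Complex.cpow_one]
    rw [hq1z]
    field_simp
    ring
end

section
/- Let Ψ_1 : ℝ → ℝ be the p-periodic continuous fluctuation of the expected output sum of a complete deterministic subsequential transducer (as in the main theorem of the paper). Then for every α ∈ (0,1), Ψ_1 satisfies a Hölder condition of order α: there exists C > 0 such that |Ψ_1(y) − Ψ_1(x)| ≤ C|y − x|^α for all x, y ∈ ℝ. -/
set_option maxHeartbeats 1000000

noncomputable def trm (q d p : ℕ) (f : ℕ → ℕ → ℂ) (l m : ℕ) (x : ℝ) : ℂ :=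
  (((q : ℝ) ^ (-(d : ℝ) * (m : ℝ)) : ℝ) : ℂ) *
    Complex.exp (2 * Real.pi * Complex.I * (l : ℂ) *
      (((⌊x⌋ : ℤ) : ℂ) - (m : ℂ)) / (p : ℂ)) *
    f l (Int.toNat ⌊(q : ℝ) ^ (Int.fract x + (m : ℝ))⌋)

noncomputable def WW (q d p : ℕ) (f : ℕ → ℕ → ℂ) (x : ℝ) : ℂ :=
  ∑ l ∈ Finset.range p, ∑' m : ℕ, trm q d p f l m x

noncomputable def rr (q : ℕ) (m : ℕ) (x : ℝ) : ℕ := ⌊(q : ℝ) ^ (Int.fract x + (m : ℝ))⌋₊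

lemma trm_eq (q d p : ℕ) (f : ℕ → ℕ → ℂ) (l m : ℕ) (x : ℝ) :
    trm q d p f l m x =
      (((q : ℝ) ^ (-(d : ℝ) * (m : ℝ)) : ℝ) : ℂ) *
      Complex.exp (2 * Real.pi * Complex.I * (l : ℂ) *
        (((⌊x⌋ : ℤ) : ℂ) - (m : ℂ)) / (p : ℂ)) * f l (rr q m x) := by
  rw [trm, rr, Int.floor_toNat]

section

variable {q d p : ℕ} {f : ℕ → ℕ → ℂ} {K : ℝ}

lemma rr_one_le (hq : 2 ≤ q) (m : ℕ) (x : ℝ) : 1 ≤ rr q m x := by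
  have hQ1 : (1:ℝ) ≤ (q:ℝ) := by exact_mod_cast le_trans (by norm_num) hq
  have : (1:ℝ) ≤ (q : ℝ) ^ (Int.fract x + (m : ℝ)) :=
    Real.one_le_rpow hQ1 (add_nonneg (Int.fract_nonneg x) (Nat.cast_nonneg m))
  exact Nat.le_floor (by exact_mod_cast this)

lemma rr_le (hq : 2 ≤ q) (m : ℕ) (x : ℝ) : ((rr q m x : ℝ)) ≤ (q:ℝ) ^ (m+1) := by
  have hQ1 : (1:ℝ) ≤ (q:ℝ) := by exact_mod_cast le_trans (by norm_num) hq
  have h0 : (0:ℝ) ≤ (q : ℝ) ^ (Int.fract x + (m : ℝ)) := by positivity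
  refine (Nat.floor_le h0).trans ?_
  rw [← Real.rpow_natCast (q:ℝ) (m+1)]
  refine Real.rpow_le_rpow_of_exponent_le hQ1 ?_
  have := (Int.fract_lt_one x).le
  push_cast
  linarith

lemma norm_trm_le (hq : 2 ≤ q) (hd : 1 ≤ d) (hK : 0 ≤ K)
    (hf : ∀ l r : ℕ, 1 ≤ r → ‖f l r‖ ≤ K * (r : ℝ) ^ (d - 1) * (Real.log r + 1))
    (l m : ℕ) (x : ℝ) :
    ‖trm q d p f l m x‖ ≤
      (K * (q:ℝ) ^ (d-1) * (Real.log q + 1)) * ((m:ℝ)+1) * ((q:ℝ)⁻¹)^m := by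
  have hQ1 : (1:ℝ) < (q:ℝ) := by exact_mod_cast lt_of_lt_of_le (by norm_num) hq
  have hQ0 : (0:ℝ) < (q:ℝ) := by linarith
  set Q := (q:ℝ)
  set r := rr q m x with hr
  have hr1 : 1 ≤ r := rr_one_le hq m x
  have hrle : (r:ℝ) ≤ Q ^ (m+1) := rr_le hq m x
  have hrpos : (0:ℝ) < r := by exact_mod_cast hr1
  -- norm of the three factors
  have hnorm : ‖trm q d p f l m x‖ = Q ^ (-(d:ℝ) * m) * ‖f l r‖ := by
    have hto : ⌊(q:ℝ) ^ (Int.fract x + (m : ℝ))⌋.toNat = r := by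
      rw [hr, rr, Int.floor_toNat]
    rw [trm, hto, norm_mul, norm_mul]
    have he : (2 * (Real.pi:ℂ) * Complex.I * (l : ℂ) * (((⌊x⌋ : ℤ) : ℂ) - (m : ℂ)) / (p : ℂ))
        = ((2 * Real.pi * (l:ℝ) * (((⌊x⌋ : ℤ):ℝ) - (m : ℝ)) / (p : ℝ) : ℝ) : ℂ) * Complex.I := by
      push_cast
      ring
    rw [he, Complex.norm_exp_ofReal_mul_I, Complex.norm_real, Real.norm_eq_abs,
      abs_of_nonneg (Real.rpow_nonneg hQ0.le _)]
    ring
  rw [hnorm]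
  have hfb : ‖f l r‖ ≤ K * (r : ℝ) ^ (d - 1) * (Real.log r + 1) := hf l r hr1
  have h2 : (r:ℝ) ^ (d-1) ≤ (Q ^ (m+1)) ^ (d-1) := pow_le_pow_left₀ hrpos.le hrle _
  have h3 : Real.log r + 1 ≤ ((m:ℝ)+1) * (Real.log Q + 1) := by
    have hlog : Real.log r ≤ ((m:ℝ)+1) * Real.log Q := by
      have := Real.log_le_log hrpos hrle
      rwa [Real.log_pow, Nat.cast_add, Nat.cast_one] at this
    have hlq : 0 ≤ Real.log Q := Real.log_nonneg hQ1.le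
    have hm0 : (0:ℝ) ≤ (m:ℝ) := Nat.cast_nonneg m
    nlinarith
  have hP : (0:ℝ) ≤ Q ^ (-(d:ℝ) * m) := Real.rpow_nonneg hQ0.le _
  calc Q ^ (-(d:ℝ) * m) * ‖f l r‖
      ≤ Q ^ (-(d:ℝ) * m) * (K * ((Q ^ (m+1)) ^ (d-1)) * (((m:ℝ)+1) * (Real.log Q + 1))) := by
        refine mul_le_mul_of_nonneg_left ?_ hP
        calc ‖f l r‖ ≤ K * (r : ℝ) ^ (d - 1) * (Real.log r + 1) := hfb
          _ ≤ K * ((Q ^ (m+1)) ^ (d-1)) * (((m:ℝ)+1) * (Real.log Q + 1)) := by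
              have h1 : (0:ℝ) ≤ Real.log r + 1 := by
                have : (0:ℝ) ≤ Real.log r := Real.log_nonneg (by exact_mod_cast hr1)
                linarith
              have h4 : (0:ℝ) ≤ (r:ℝ) ^ (d-1) := by positivity
              gcongr
    _ = (K * Q ^ (d-1) * (Real.log Q + 1)) * ((m:ℝ)+1) * (Q⁻¹)^m := by
        have hsplit : Q ^ (-(d:ℝ) * m) * Q ^ ((((m+1)*(d-1) : ℕ)):ℝ)
            = Q ^ (((d-1:ℕ)):ℝ) * Q ^ (-(m:ℝ)) := by
          rw [← Real.rpow_add hQ0, ← Real.rpow_add hQ0]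
          congr 1
          push_cast [Nat.cast_sub hd]
          ring
        have hQm : Q ^ (-(m:ℝ)) = (Q⁻¹)^m := by
          rw [Real.rpow_neg hQ0.le, Real.rpow_natCast, inv_pow]
        have hQd : Q ^ (((d-1:ℕ)):ℝ) = Q ^ (d-1) := Real.rpow_natCast _ _
        rw [← pow_mul, ← Real.rpow_natCast Q ((m+1)*(d-1))]
        calc Q ^ (-(d:ℝ) * m) * (K * Q ^ ((((m+1)*(d-1) : ℕ)):ℝ) * (((m:ℝ)+1) * (Real.log Q + 1)))
            = (Q ^ (-(d:ℝ) * m) * Q ^ ((((m+1)*(d-1) : ℕ)):ℝ)) * (K * (((m:ℝ)+1) * (Real.log Q + 1))) := by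
              ring
          _ = (K * Q ^ (d-1) * (Real.log Q + 1)) * ((m:ℝ)+1) * (Q⁻¹)^m := by
              rw [hsplit, hQm, hQd]; ring

lemma aux_summable {r : ℝ} (hr : |r| < 1) (c : ℝ) :
    Summable (fun m : ℕ => c * (((m:ℝ)+1) * r^m)) := by
  have h1 : Summable (fun m : ℕ => ((m:ℝ))^1 * r^m) :=
    summable_pow_mul_geometric_of_norm_lt_one 1 (by rwa [Real.norm_eq_abs])
  have h2 : Summable (fun m : ℕ => r^m) :=
    summable_geometric_of_norm_lt_one (by rwa [Real.norm_eq_abs])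
  have h3 := (h1.add h2).mul_left c
  refine h3.congr fun m => ?_
  ring

lemma aux_tsum_le {r : ℝ} (hr0 : 0 ≤ r) (hr : r ≤ 1/2) :
    ∑' m : ℕ, (((m:ℝ)+1) * r^m) ≤ 4 := by
  have hrlt : |r| < 1 := by rw [abs_of_nonneg hr0]; linarith
  have hrn : ‖r‖ < 1 := by rwa [Real.norm_eq_abs]
  have h1 : Summable (fun m : ℕ => ((m:ℝ)) * r^m) := by
    have := summable_pow_mul_geometric_of_norm_lt_one 1 hrn (R := ℝ)
    refine this.congr fun m => ?_; ring
  have h2 : Summable (fun m : ℕ => r^m) := summable_geometric_of_norm_lt_one hrn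
  have heq : ∑' m : ℕ, (((m:ℝ)+1) * r^m)
      = (∑' m : ℕ, ((m:ℝ)) * r^m) + ∑' m : ℕ, r^m := by
    rw [← Summable.tsum_add h1 h2]
    exact tsum_congr fun m => by ring
  rw [heq, tsum_coe_mul_geometric_of_norm_lt_one hrn, tsum_geometric_of_lt_one hr0 (by linarith)]
  have h1r : (1:ℝ)/2 ≤ 1 - r := by linarith
  have hsq : (1/2:ℝ)*(1/2) ≤ (1-r)^2 := by nlinarith
  have hpos : (0:ℝ) < (1-r)^2 := by nlinarith
  have : r / (1-r)^2 ≤ 2 := by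
    rw [div_le_iff₀ hpos]; nlinarith
  have h2' : (1 - r)⁻¹ ≤ 2 := by
    rw [inv_le_comm₀ (by linarith) (by norm_num)]; linarith
  linarith


lemma qinv_lt (hq : 2 ≤ q) : |((q:ℝ))⁻¹| < 1 := by
  have hQ1 : (1:ℝ) < (q:ℝ) := by exact_mod_cast lt_of_lt_of_le (by norm_num) hq
  rw [abs_of_nonneg (by positivity)]
  exact inv_lt_one_of_one_lt₀ hQ1

lemma qinv_le_half (hq : 2 ≤ q) : ((q:ℝ))⁻¹ ≤ 1/2 := by
  have h2 : (2:ℝ) ≤ (q:ℝ) := by exact_mod_cast hq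
  rw [show (1:ℝ)/2 = (2:ℝ)⁻¹ by norm_num]
  exact inv_anti₀ (by norm_num) h2

lemma A_nonneg (hq : 2 ≤ q) (hK : 0 ≤ K) :
    0 ≤ K * (q:ℝ) ^ (d-1) * (Real.log q + 1) := by
  have hl : (0:ℝ) ≤ Real.log q :=
    Real.log_nonneg (by exact_mod_cast le_trans (by norm_num) hq)
  have h2 : (0:ℝ) ≤ (q:ℝ) ^ (d-1) := by positivity
  have := mul_nonneg (mul_nonneg hK h2) (by linarith : (0:ℝ) ≤ Real.log q + 1)
  linarith

lemma summable_trm (hq : 2 ≤ q) (hd : 1 ≤ d) (hK : 0 ≤ K)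
    (hf : ∀ l r : ℕ, 1 ≤ r → ‖f l r‖ ≤ K * (r : ℝ) ^ (d - 1) * (Real.log r + 1))
    (l : ℕ) (x : ℝ) : Summable (fun m => trm q d p f l m x) := by
  refine Summable.of_norm_bounded
    (aux_summable (qinv_lt hq) (K * (q:ℝ) ^ (d-1) * (Real.log q + 1))) (fun m => ?_)
  exact (norm_trm_le hq hd hK hf l m x (p := p)).trans_eq (by ring)

lemma norm_tsum_trm_le (hq : 2 ≤ q) (hd : 1 ≤ d) (hK : 0 ≤ K)
    (hf : ∀ l r : ℕ, 1 ≤ r → ‖f l r‖ ≤ K * (r : ℝ) ^ (d - 1) * (Real.log r + 1))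
    (l : ℕ) (x : ℝ) :
    ‖∑' m : ℕ, trm q d p f l m x‖ ≤ (K * (q:ℝ) ^ (d-1) * (Real.log q + 1)) * 4 := by
  set A := K * (q:ℝ) ^ (d-1) * (Real.log q + 1) with hA
  have hA0 : 0 ≤ A := A_nonneg hq hK
  have h1 : ‖∑' m : ℕ, trm q d p f l m x‖ ≤ ∑' m : ℕ, (A * (((m:ℝ)+1) * ((q:ℝ)⁻¹)^m)) := by
    refine tsum_of_norm_bounded (aux_summable (qinv_lt hq) A).hasSum (fun m => ?_)
    exact (norm_trm_le hq hd hK hf l m x (p := p)).trans_eq (by rw [hA]; ring)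
  rw [tsum_mul_left] at h1
  refine h1.trans ?_
  exact mul_le_mul_of_nonneg_left (aux_tsum_le (by positivity) (qinv_le_half hq)) hA0

lemma tail_trm_le (hq : 2 ≤ q) (hd : 1 ≤ d) (hK : 0 ≤ K)
    (hf : ∀ l r : ℕ, 1 ≤ r → ‖f l r‖ ≤ K * (r : ℝ) ^ (d - 1) * (Real.log r + 1))
    (l : ℕ) (x : ℝ) (M : ℕ) :
    ‖(∑' m : ℕ, trm q d p f l m x) - ∑ m ∈ Finset.range M, trm q d p f l m x‖ ≤
      ((K * (q:ℝ) ^ (d-1) * (Real.log q + 1)) * (((M:ℝ)+1) * ((q:ℝ)⁻¹)^M)) * 4 := by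
  set A := K * (q:ℝ) ^ (d-1) * (Real.log q + 1) with hA
  have hA0 : 0 ≤ A := A_nonneg hq hK
  set r : ℝ := ((q:ℝ))⁻¹ with hrdef
  have hr0 : (0:ℝ) ≤ r := by positivity
  set c := A * (((M:ℝ)+1) * r^M) with hc
  have hc0 : 0 ≤ c := by positivity
  have hs := summable_trm hq hd hK hf l x (p := p)
  have hdiff : (∑' m : ℕ, trm q d p f l m x) - ∑ m ∈ Finset.range M, trm q d p f l m x
      = ∑' i : ℕ, trm q d p f l (i+M) x := by
    rw [← Summable.sum_add_tsum_nat_add M hs]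
    exact add_sub_cancel_left _ _
  rw [hdiff]
  have key : ∀ i : ℕ, ‖trm q d p f l (i+M) x‖ ≤ c * (((i:ℝ)+1) * r^i) := by
    intro i
    have h0 : ‖trm q d p f l (i+M) x‖ ≤ A * ((((i+M:ℕ):ℝ)+1) * r^(i+M)) := by
      exact (norm_trm_le hq hd hK hf l (i+M) x (p := p)).trans_eq (by rw [hA, hrdef]; ring)
    refine h0.trans ?_
    have hle : (((i+M:ℕ):ℝ)+1) ≤ ((M:ℝ)+1) * ((i:ℝ)+1) := by
      push_cast
      nlinarith [Nat.cast_nonneg (α := ℝ) i, Nat.cast_nonneg (α := ℝ) M]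
    calc A * ((((i+M:ℕ):ℝ)+1) * r^(i+M))
        = (A * r^M * r^i) * (((i+M:ℕ):ℝ)+1) := by rw [pow_add]; ring
      _ ≤ (A * r^M * r^i) * (((M:ℝ)+1) * ((i:ℝ)+1)) := by
          refine mul_le_mul_of_nonneg_left hle (by positivity)
      _ = c * (((i:ℝ)+1) * r^i) := by rw [hc]; ring
  have h1 : ‖∑' i : ℕ, trm q d p f l (i+M) x‖ ≤ ∑' i : ℕ, (c * (((i:ℝ)+1) * r^i)) :=
    tsum_of_norm_bounded (aux_summable (qinv_lt hq) c).hasSum key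
  rw [tsum_mul_left] at h1
  refine h1.trans ?_
  exact mul_le_mul_of_nonneg_left (aux_tsum_le hr0 (qinv_le_half hq)) hc0

lemma WW_norm_le (hq : 2 ≤ q) (hd : 1 ≤ d) (hK : 0 ≤ K)
    (hf : ∀ l r : ℕ, 1 ≤ r → ‖f l r‖ ≤ K * (r : ℝ) ^ (d - 1) * (Real.log r + 1))
    (x : ℝ) :
    ‖WW q d p f x‖ ≤ (p:ℝ) * ((K * (q:ℝ) ^ (d-1) * (Real.log q + 1)) * 4) := by
  rw [WW]
  refine (norm_sum_le _ _).trans ?_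
  refine (Finset.sum_le_sum (fun l _ => norm_tsum_trm_le hq hd hK hf l x)).trans ?_
  rw [Finset.sum_const, Finset.card_range, nsmul_eq_mul]

lemma rr_mono (hq : 2 ≤ q) {x x' : ℝ} (m : ℕ) (hfl : ⌊x⌋ = ⌊x'⌋) (hle : x ≤ x') :
    rr q m x ≤ rr q m x' := by
  have hQ1 : (1:ℝ) ≤ (q:ℝ) := by exact_mod_cast le_trans (by norm_num) hq
  refine Nat.floor_mono (Real.rpow_le_rpow_of_exponent_le hQ1 ?_)
  have h1 : Int.fract x ≤ Int.fract x' := by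
    rw [Int.fract, Int.fract, hfl]
    linarith
  linarith

lemma rr_step (hq : 2 ≤ q) (y : ℝ) (m k : ℕ) : rr q m y = rr q (m+k) y / q^k := by
  have hQ0 : (0:ℝ) < (q:ℝ) := by
    have : (0:ℕ) < q := by omega
    exact_mod_cast this
  have hkey : (q:ℝ) ^ (Int.fract y + (m:ℝ))
      = (q:ℝ) ^ (Int.fract y + ((m+k : ℕ):ℝ)) / ((q^k : ℕ):ℝ) := by
    rw [eq_div_iff (by positivity)]
    push_cast
    rw [← Real.rpow_natCast (q:ℝ) k, ← Real.rpow_add hQ0]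
    congr 1
    ring
  rw [rr, rr, hkey, Nat.floor_div_natCast]

lemma rr_det (hq : 2 ≤ q) {x x' : ℝ} (M : ℕ) (hM : 1 ≤ M)
    (h : rr q (M-1) x = rr q (M-1) x') : ∀ m, m < M → rr q m x = rr q m x' := by
  intro m hm
  have h1 := rr_step hq x m (M-1-m)
  have h2 := rr_step hq x' m (M-1-m)
  rw [show m + (M-1-m) = M-1 by omega] at h1 h2
  rw [h1, h2, h]

lemma WW_diff_le (hq : 2 ≤ q) (hd : 1 ≤ d) (hK : 0 ≤ K)
    (hf : ∀ l r : ℕ, 1 ≤ r → ‖f l r‖ ≤ K * (r : ℝ) ^ (d - 1) * (Real.log r + 1))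
    (x x' : ℝ) (M : ℕ) (hfl : ⌊x⌋ = ⌊x'⌋) (hrr : ∀ m, m < M → rr q m x = rr q m x') :
    ‖WW q d p f x' - WW q d p f x‖ ≤
      (p:ℝ) * (2 * (((K * (q:ℝ) ^ (d-1) * (Real.log q + 1)) * (((M:ℝ)+1) * ((q:ℝ)⁻¹)^M)) * 4)) := by
  rw [WW, WW, ← Finset.sum_sub_distrib]
  refine (norm_sum_le _ _).trans ?_
  have hl : ∀ l ∈ Finset.range p,
      ‖(∑' m : ℕ, trm q d p f l m x') - ∑' m : ℕ, trm q d p f l m x‖ ≤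
      2 * (((K * (q:ℝ) ^ (d-1) * (Real.log q + 1)) * (((M:ℝ)+1) * ((q:ℝ)⁻¹)^M)) * 4) := by
    intro l _
    have hS : (∑ m ∈ Finset.range M, trm q d p f l m x)
        = ∑ m ∈ Finset.range M, trm q d p f l m x' := by
      refine Finset.sum_congr rfl (fun m hm => ?_)
      rw [trm_eq q d p f l m x, trm_eq q d p f l m x', hfl,
        hrr m (Finset.mem_range.1 hm)]
    have e1 := tail_trm_le hq hd hK hf l x' M (p := p)
    have e2 := tail_trm_le hq hd hK hf l x M (p := p)
    calc ‖(∑' m : ℕ, trm q d p f l m x') - ∑' m : ℕ, trm q d p f l m x‖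
        = ‖((∑' m : ℕ, trm q d p f l m x') - ∑ m ∈ Finset.range M, trm q d p f l m x')
            - ((∑' m : ℕ, trm q d p f l m x) - ∑ m ∈ Finset.range M, trm q d p f l m x)‖ := by
          rw [hS]; congr 1; ring
      _ ≤ _ := (norm_sub_le _ _).trans (by linarith)
  refine (Finset.sum_le_sum hl).trans ?_
  rw [Finset.sum_const, Finset.card_range, nsmul_eq_mul]

lemma WW_eq_aux {eT : ℝ} {Ψ : ℝ → ℂ} (hq : 2 ≤ q)
    (hΨW : ∀ x : ℝ, Ψ x = -(eT : ℂ) * ((Int.fract x : ℝ) : ℂ)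
      - (((q : ℝ) ^ (-(d : ℝ) * Int.fract x) : ℝ) : ℂ) * WW q d p f x) (x : ℝ) :
    WW q d p f x = (-(eT : ℂ) * ((Int.fract x : ℝ) : ℂ) - Ψ x) *
      (((q : ℝ) ^ ((d : ℝ) * Int.fract x) : ℝ) : ℂ) := by
  have hQ0 : (0:ℝ) < (q:ℝ) := by
    have : (0:ℕ) < q := by omega
    exact_mod_cast this
  have h2 : (((q:ℝ) ^ (-(d:ℝ) * Int.fract x) : ℝ) : ℂ) * WW q d p f x
      = -(eT : ℂ) * ((Int.fract x : ℝ) : ℂ) - Ψ x := by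
    linear_combination hΨW x
  have hinv : (((q:ℝ) ^ (-(d:ℝ) * Int.fract x) : ℝ) : ℂ) *
      (((q:ℝ) ^ ((d:ℝ) * Int.fract x) : ℝ) : ℂ) = 1 := by
    rw [← Complex.ofReal_mul, ← Real.rpow_add hQ0]
    norm_num
  linear_combination (((q:ℝ) ^ ((d:ℝ) * Int.fract x) : ℝ) : ℂ) * h2
    - (WW q d p f x) * hinv

lemma WW_continuousAt {eT : ℝ} {Ψ : ℝ → ℂ} (hq : 2 ≤ q) (hcont : Continuous Ψ)
    (hΨW : ∀ x : ℝ, Ψ x = -(eT : ℂ) * ((Int.fract x : ℝ) : ℂ)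
      - (((q : ℝ) ^ (-(d : ℝ) * Int.fract x) : ℝ) : ℂ) * WW q d p f x)
    {t : ℝ} (ht : t ≠ ⌊t⌋) : ContinuousAt (WW q d p f) t := by
  have hQ0 : (0:ℝ) < (q:ℝ) := by
    have : (0:ℕ) < q := by omega
    exact_mod_cast this
  have hfr : ContinuousAt Int.fract t := continuousAt_fract ht
  have hV : ContinuousAt (fun x : ℝ => (-(eT : ℂ) * ((Int.fract x : ℝ) : ℂ) - Ψ x) *
      (((q : ℝ) ^ ((d : ℝ) * Int.fract x) : ℝ) : ℂ)) t := by
    have hrpw : ContinuousAt (fun x : ℝ => (q:ℝ) ^ ((d:ℝ) * Int.fract x)) t := by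
      have heq : (fun x : ℝ => (q:ℝ) ^ ((d:ℝ) * Int.fract x))
          = fun x : ℝ => Real.exp (Real.log q * ((d:ℝ) * Int.fract x)) :=
        funext fun x => Real.rpow_def_of_pos hQ0 _
      rw [heq]
      exact Real.continuous_exp.continuousAt.comp
        ((continuousAt_const.mul (continuousAt_const.mul hfr)))
    exact (((continuousAt_const.mul
      (Complex.continuous_ofReal.continuousAt.comp hfr)).sub hcont.continuousAt).mul
      (Complex.continuous_ofReal.continuousAt.comp hrpw))
  exact hV.congr (Filter.Eventually.of_forall fun x => (WW_eq_aux hq hΨW x).symm)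

lemma BB_nonneg (hq : 2 ≤ q) (hK : 0 ≤ K) (M : ℕ) :
    0 ≤ (p:ℝ) * (2 * (((K * (q:ℝ) ^ (d-1) * (Real.log q + 1)) *
      (((M:ℝ)+1) * ((q:ℝ)⁻¹)^M)) * 4)) := by
  have hA0 := A_nonneg hq hK (d := d)
  positivity

lemma WW_key {eT : ℝ} {Ψ : ℝ → ℂ} (hq : 2 ≤ q) (hd : 1 ≤ d) (hK : 0 ≤ K)
    (hf : ∀ l r : ℕ, 1 ≤ r → ‖f l r‖ ≤ K * (r : ℝ) ^ (d - 1) * (Real.log r + 1))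
    (hcont : Continuous Ψ)
    (hΨW : ∀ x : ℝ, Ψ x = -(eT : ℂ) * ((Int.fract x : ℝ) : ℂ)
      - (((q : ℝ) ^ (-(d : ℝ) * Int.fract x) : ℝ) : ℂ) * WW q d p f x)
    (M : ℕ) (hM : 1 ≤ M) (n : ℤ) :
    ∀ k : ℕ, ∀ x y : ℝ, (n:ℝ) ≤ x → x ≤ y → y < (n:ℝ)+1 →
      rr q (M-1) y ≤ rr q (M-1) x + k →
      ‖WW q d p f y - WW q d p f x‖ ≤ ((k:ℝ)+1) *
        ((p:ℝ) * (2 * (((K * (q:ℝ) ^ (d-1) * (Real.log q + 1)) *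
          (((M:ℝ)+1) * ((q:ℝ)⁻¹)^M)) * 4))) := by
  have hQ1 : (1:ℝ) < (q:ℝ) := by exact_mod_cast lt_of_lt_of_le (by norm_num) hq
  have hQ0 : (0:ℝ) < (q:ℝ) := by linarith
  set B := (p:ℝ) * (2 * (((K * (q:ℝ) ^ (d-1) * (Real.log q + 1)) *
    (((M:ℝ)+1) * ((q:ℝ)⁻¹)^M)) * 4)) with hBdef
  have hB0 : 0 ≤ B := BB_nonneg hq hK M
  set e : ℝ := ((M-1 : ℕ) : ℝ) with hedef
  intro k
  induction k with
  | zero =>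
    intro x y hnx hxy hy1 hrle
    have hfx : ⌊x⌋ = n := Int.floor_eq_iff.2 ⟨hnx, by push_cast; linarith⟩
    have hfy : ⌊y⌋ = n := Int.floor_eq_iff.2 ⟨by linarith, by push_cast; linarith⟩
    have hfl : ⌊x⌋ = ⌊y⌋ := by rw [hfx, hfy]
    have hre : rr q (M-1) x = rr q (M-1) y :=
      le_antisymm (rr_mono hq _ hfl hxy) (by simpa using hrle)
    have := WW_diff_le hq hd hK hf x y M hfl (rr_det hq M hM hre) (p := p)
    rw [hBdef]
    push_cast
    linarith
  | succ k ih =>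
    intro x y hnx hxy hy1 hrle
    have hfx : ⌊x⌋ = n := Int.floor_eq_iff.2 ⟨hnx, by push_cast; linarith⟩
    have hfy : ⌊y⌋ = n := Int.floor_eq_iff.2 ⟨by linarith, by push_cast; linarith⟩
    by_cases hc : rr q (M-1) y ≤ rr q (M-1) x + k
    · have := ih x y hnx hxy hy1 hc
      have hk : ((k:ℝ)+1) * B ≤ ((k:ℝ)+1+1) * B := by nlinarith
      push_cast
      push_cast at this
      linarith
    · -- there is a jump point
      have hxltY : rr q (M-1) x < rr q (M-1) y := by omega
      set R : ℕ := rr q (M-1) x + 1 with hRdef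
      have hR0 : (0:ℝ) < (R:ℝ) := by positivity
      set t : ℝ := (n:ℝ) + (Real.logb (q:ℝ) R - e) with htdef
      have hte : t - n + e = Real.logb (q:ℝ) R := by rw [htdef]; ring
      have htR : (q:ℝ) ^ (t - (n:ℝ) + e) = (R:ℝ) := by
        rw [hte]
        exact Real.rpow_logb hQ0 (ne_of_gt hQ1) hR0
      have hfrx : Int.fract x = x - n := by rw [Int.fract, hfx]
      have hfry : Int.fract y = y - n := by rw [Int.fract, hfy]
      -- x < t
      have hxa : (q:ℝ) ^ (x - (n:ℝ) + e) < (R:ℝ) := by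
        have h1 : (q:ℝ) ^ (Int.fract x + e) < (rr q (M-1) x : ℝ) + 1 := by
          have := Nat.lt_floor_add_one ((q:ℝ) ^ (Int.fract x + e))
          simpa [rr, hedef] using this
        rw [hfrx] at h1
        rw [hRdef]
        push_cast
        linarith
      have hxt : x < t := by
        have := (Real.rpow_lt_rpow_left_iff hQ1).1 (htR ▸ hxa)
        linarith
      -- t ≤ y
      have hty : t ≤ y := by
        have h1 : (R:ℝ) ≤ (rr q (M-1) y : ℝ) := by
          have : R ≤ rr q (M-1) y := by omega
          exact_mod_cast this
        have h2 : (rr q (M-1) y : ℝ) ≤ (q:ℝ) ^ (Int.fract y + e) := by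
          have := Nat.floor_le (by positivity : (0:ℝ) ≤ (q:ℝ) ^ (Int.fract y + e))
          simpa [rr, hedef] using this
        rw [hfry] at h2
        have h3 : (q:ℝ) ^ (t - (n:ℝ) + e) ≤ (q:ℝ) ^ (y - (n:ℝ) + e) := by
          rw [htR]; linarith
        have := (Real.rpow_le_rpow_left_iff hQ1).1 h3
        linarith
      have hnt : (n:ℝ) < t := lt_of_le_of_lt hnx hxt
      have hft : ⌊t⌋ = n := Int.floor_eq_iff.2 ⟨hnt.le, by push_cast; linarith⟩
      have hfrt : Int.fract t = t - n := by rw [Int.fract, hft]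
      have hrt : rr q (M-1) t = R := by
        rw [rr, ← hedef, hfrt, htR, Nat.floor_natCast]
      -- Step A : for all s in [x,t), WW s is at distance ≤ B/(something)... just ≤ 2-tail bound
      have hstepA : ∀ s : ℝ, x ≤ s → s < t → ‖WW q d p f s - WW q d p f x‖ ≤ B := by
        intro s hxs hst
        have hfs : ⌊s⌋ = n := Int.floor_eq_iff.2 ⟨by linarith, by push_cast; linarith⟩
        have hfrs : Int.fract s = s - n := by rw [Int.fract, hfs]
        have hrs : rr q (M-1) s = rr q (M-1) x := by
          refine le_antisymm ?_ (rr_mono hq _ (by rw [hfx, hfs]) hxs)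
          have h1 : (q:ℝ) ^ (s - (n:ℝ) + e) < (R:ℝ) := by
            rw [← htR]
            exact Real.rpow_lt_rpow_of_exponent_lt hQ1 (by linarith)
          have h2 : rr q (M-1) s < R := by
            rw [rr, ← hedef, hfrs]
            exact (Nat.floor_lt (by positivity)).2 h1
          omega
        have := WW_diff_le (p := p) hq hd hK hf x s M (by rw [hfx, hfs])
          (rr_det hq M hM hrs.symm)
        rw [hBdef]
        linarith
      -- pass to the limit s → t⁻
      have htne : t ≠ (⌊t⌋ : ℝ) := by rw [hft]; exact (ne_of_gt hnt)
      have hWc : ContinuousAt (WW q d p f) t := WW_continuousAt hq hcont hΨW htne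
      have hclos : t ∈ closure (Set.Ico x t) := by
        rw [closure_Ico (ne_of_lt hxt)]
        exact ⟨hxt.le, le_refl t⟩
      haveI : (nhdsWithin t (Set.Ico x t)).NeBot :=
        mem_closure_iff_nhdsWithin_neBot.1 hclos
      have htend : Filter.Tendsto (fun s => ‖WW q d p f s - WW q d p f x‖)
          (nhdsWithin t (Set.Ico x t)) (nhds ‖WW q d p f t - WW q d p f x‖) :=
        ((hWc.tendsto.mono_left nhdsWithin_le_nhds).sub tendsto_const_nhds).norm
      have hWtx : ‖WW q d p f t - WW q d p f x‖ ≤ B := by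
        refine le_of_tendsto htend ?_
        filter_upwards [self_mem_nhdsWithin] with s hs
        exact hstepA s hs.1 hs.2
      -- induction on [t,y]
      have hWyt : ‖WW q d p f y - WW q d p f t‖ ≤ ((k:ℝ)+1) * B := by
        refine ih t y hnt.le hty hy1 ?_
        rw [hrt, hRdef]
        omega
      have := norm_sub_le_norm_sub_add_norm_sub (WW q d p f y) (WW q d p f t) (WW q d p f x)
      push_cast
      nlinarith [hWyt, hWtx]

lemma exp_diff_le {a b : ℝ} (ha : 0 ≤ a) (hab : a ≤ b) :
    Real.exp (-a) - Real.exp (-b) ≤ b - a := by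
  have hc : 0 ≤ b - a := by linarith
  have h1 : Real.exp (-b) = Real.exp (-a) * Real.exp (-(b-a)) := by
    rw [← Real.exp_add]; ring_nf
  have h2 : -(b-a) + 1 ≤ Real.exp (-(b-a)) := Real.add_one_le_exp _
  have h3 : Real.exp (-a) ≤ 1 := Real.exp_le_one_iff.2 (by linarith)
  have h4 : Real.exp (-(b-a)) ≤ 1 := Real.exp_le_one_iff.2 (by linarith)
  have h5 : 0 < Real.exp (-a) := Real.exp_pos _
  nlinarith

lemma rpow_h_sub_one_le {Q h : ℝ} (hQ : 1 ≤ Q) (h0 : 0 ≤ h) (h1 : h ≤ 1) :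
    Q ^ h - 1 ≤ h * Real.log Q * Q := by
  have hQ0 : (0:ℝ) < Q := by linarith
  have hlq : 0 ≤ Real.log Q := Real.log_nonneg hQ
  set z := h * Real.log Q with hz
  have hz0 : 0 ≤ z := by positivity
  have hrw : Q ^ h = Real.exp z := by
    rw [Real.rpow_def_of_pos hQ0, hz]; ring_nf
  have hzl : z ≤ Real.log Q := by nlinarith
  have hQh : Real.exp z ≤ Q := by
    calc Real.exp z ≤ Real.exp (Real.log Q) := Real.exp_le_exp.2 hzl
    _ = Q := Real.exp_log hQ0
  have h2 : -z + 1 ≤ Real.exp (-z) := Real.add_one_le_exp _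
  have h3 : Real.exp (-z) = (Real.exp z)⁻¹ := Real.exp_neg z
  have h4 : 0 < Real.exp z := Real.exp_pos _
  rw [hrw]
  -- exp z - 1 ≤ z * exp z ≤ z * Q
  have h5 : Real.exp z - 1 ≤ z * Real.exp z := by
    have := mul_le_mul_of_nonneg_left h2 h4.le
    rw [h3] at this
    have h6 : Real.exp z * (Real.exp z)⁻¹ = 1 := mul_inv_cancel₀ (ne_of_gt h4)
    nlinarith
  have h7 : z * Real.exp z ≤ z * Q := mul_le_mul_of_nonneg_left hQh hz0
  rw [hz] at h5 h7 ⊢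
  linarith

noncomputable def CC (q d p : ℕ) (K : ℝ) : ℝ :=
  16*(p:ℝ)*(K * (q:ℝ)^(d-1) * (Real.log q + 1))*((⌈(q:ℝ)^2 * Real.log q⌉₊ : ℝ) + 2)

lemma CC_nonneg (hq : 2 ≤ q) (hK : 0 ≤ K) : 0 ≤ CC q d p K := by
  have hA0 := A_nonneg hq hK (d := d)
  rw [CC]
  positivity

lemma interval_bound {eT : ℝ} {Ψ : ℝ → ℂ} (hq : 2 ≤ q) (hd : 1 ≤ d) (hK : 0 ≤ K)
    (hf : ∀ l r : ℕ, 1 ≤ r → ‖f l r‖ ≤ K * (r : ℝ) ^ (d - 1) * (Real.log r + 1))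
    (hcont : Continuous Ψ)
    (hΨW : ∀ x : ℝ, Ψ x = -(eT : ℂ) * ((Int.fract x : ℝ) : ℂ)
      - (((q : ℝ) ^ (-(d : ℝ) * Int.fract x) : ℝ) : ℂ) * WW q d p f x)
    (n : ℤ) (x y : ℝ) (hnx : (n:ℝ) ≤ x) (hxy : x < y) (hy1 : y < (n:ℝ)+1) :
    ‖Ψ y - Ψ x‖ ≤
      (|eT| + (p:ℝ)*((K * (q:ℝ)^(d-1) * (Real.log q + 1)) * 4)*((d:ℝ)*Real.log q)
        + CC q d p K) * (y-x)
      + CC q d p K * ((y-x) * Real.log (y-x)⁻¹) := by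
  have hQ1 : (1:ℝ) < (q:ℝ) := by exact_mod_cast lt_of_lt_of_le (by norm_num) hq
  have hQ0 : (0:ℝ) < (q:ℝ) := by linarith
  set A := K * (q:ℝ)^(d-1) * (Real.log q + 1) with hAdef
  have hA0 : 0 ≤ A := A_nonneg hq hK
  set h := y - x with hhdef
  have hh0 : 0 < h := by rw [hhdef]; linarith
  have hh1 : h < 1 := by rw [hhdef]; linarith
  have hhinv1 : (1:ℝ) ≤ h⁻¹ := by
    rw [← inv_one]
    exact inv_anti₀ hh0 hh1.le
  have hloginv0 : 0 ≤ Real.log h⁻¹ := Real.log_nonneg hhinv1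
  have hlogb0 : 0 ≤ Real.logb q h⁻¹ := Real.logb_nonneg hQ1 hhinv1
  set M : ℕ := ⌊Real.logb q h⁻¹⌋₊ + 1 with hMdef
  have hM1 : 1 ≤ M := by omega
  -- q^(M-1) ≤ h⁻¹
  have hM1r : ((M-1 : ℕ):ℝ) ≤ Real.logb q h⁻¹ := by
    have : (M-1 : ℕ) = ⌊Real.logb q h⁻¹⌋₊ := by omega
    rw [this]
    exact Nat.floor_le hlogb0
  have hqM1 : (q:ℝ) ^ (((M-1:ℕ)):ℝ) ≤ h⁻¹ := by
    calc (q:ℝ) ^ (((M-1:ℕ)):ℝ) ≤ (q:ℝ) ^ (Real.logb q h⁻¹) :=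
          Real.rpow_le_rpow_of_exponent_le hQ1.le hM1r
      _ = h⁻¹ := Real.rpow_logb hQ0 (ne_of_gt hQ1) (by positivity)
  -- (q⁻¹)^M ≤ h
  have hMub : Real.logb q h⁻¹ ≤ (M:ℝ) := by
    have := (Nat.lt_floor_add_one (Real.logb q h⁻¹)).le
    rw [hMdef]
    push_cast
    linarith
  have hqM : h⁻¹ ≤ (q:ℝ) ^ ((M:ℕ):ℝ) := by
    calc h⁻¹ = (q:ℝ) ^ (Real.logb q h⁻¹) :=
          (Real.rpow_logb hQ0 (ne_of_gt hQ1) (by positivity)).symm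
      _ ≤ (q:ℝ) ^ ((M:ℕ):ℝ) := Real.rpow_le_rpow_of_exponent_le hQ1.le hMub
  have hqMinv : ((q:ℝ)⁻¹)^M ≤ h := by
    have h1 : ((q:ℝ)⁻¹)^M = ((q:ℝ)^((M:ℕ):ℝ))⁻¹ := by
      rw [inv_pow, Real.rpow_natCast]
    rw [h1]
    have h2 := inv_anti₀ (by positivity : (0:ℝ) < h⁻¹) hqM
    rwa [inv_inv] at h2
  -- M+1 bound
  have hMb : ((M:ℝ)) + 1 ≤ 2 * Real.log h⁻¹ + 2 := by
    have hlog2 : (0.6931471803 : ℝ) < Real.log 2 := Real.log_two_gt_d9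
    have hlogq : Real.log 2 ≤ Real.log q :=
      Real.log_le_log (by norm_num) (by exact_mod_cast hq)
    have hlb : Real.logb q h⁻¹ ≤ 2 * Real.log h⁻¹ := by
      rw [Real.logb, div_le_iff₀ (by linarith)]
      nlinarith
    have hMcast : ((M-1:ℕ):ℝ) = (M:ℝ) - 1 := by
      push_cast [Nat.cast_sub hM1]
      ring
    rw [hMcast] at hM1r
    linarith
  -- jump count
  set k0 : ℕ := ⌈(q:ℝ)^2 * Real.log q⌉₊ + 1 with hk0def
  have hfrx : Int.fract x = x - n := by
    rw [Int.fract, Int.floor_eq_iff.2 ⟨hnx, by push_cast; linarith⟩]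
  have hfry : Int.fract y = y - n := by
    rw [Int.fract, Int.floor_eq_iff.2 ⟨by linarith, by push_cast; linarith⟩]
  set e : ℝ := ((M-1 : ℕ) : ℝ) with hedef
  have hjump : rr q (M-1) y ≤ rr q (M-1) x + k0 := by
    have ha : (rr q (M-1) y : ℝ) ≤ (q:ℝ)^(Int.fract y + e) := by
      have := Nat.floor_le (by positivity : (0:ℝ) ≤ (q:ℝ)^(Int.fract y + e))
      simpa [rr, hedef] using this
    have hb : (q:ℝ)^(Int.fract x + e) < (rr q (M-1) x:ℝ) + 1 := by
      have := Nat.lt_floor_add_one ((q:ℝ)^(Int.fract x + e))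
      simpa [rr, hedef] using this
    have hsplit : ∀ u : ℝ, (q:ℝ)^(u + e) = (q:ℝ)^u * (q:ℝ)^e :=
      fun u => Real.rpow_add hQ0 u e
    have hyx : (q:ℝ)^(Int.fract y) = (q:ℝ)^(Int.fract x) * (q:ℝ)^h := by
      rw [← Real.rpow_add hQ0]
      congr 1
      rw [hfrx, hfry, hhdef]; ring
    have hqu : (q:ℝ)^(Int.fract x) ≤ (q:ℝ) := by
      calc (q:ℝ)^(Int.fract x) ≤ (q:ℝ)^(1:ℝ) :=
            Real.rpow_le_rpow_of_exponent_le hQ1.le (by rw [hfrx]; linarith)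
        _ = (q:ℝ) := Real.rpow_one _
      
    have hqh : (q:ℝ)^h - 1 ≤ h * Real.log q * q :=
      rpow_h_sub_one_le hQ1.le hh0.le hh1.le
    have hqupos : (0:ℝ) < (q:ℝ)^(Int.fract x) := by positivity
    have hqepos : (0:ℝ) < (q:ℝ)^e := by positivity
    have hdiff : (q:ℝ)^(Int.fract y + e) - (q:ℝ)^(Int.fract x + e)
        ≤ (q:ℝ)^2 * Real.log q := by
      rw [hsplit, hsplit, hyx]
      have step1 : (q:ℝ)^(Int.fract x) * (q:ℝ)^h - (q:ℝ)^(Int.fract x)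
          = (q:ℝ)^(Int.fract x) * ((q:ℝ)^h - 1) := by ring
      have step2 : (q:ℝ)^(Int.fract x) * ((q:ℝ)^h - 1) ≤ q * (h * Real.log q * q) := by
        have hqh0 : (0:ℝ) ≤ (q:ℝ)^h - 1 := by
          have : (1:ℝ) = (q:ℝ)^(0:ℝ) := (Real.rpow_zero _).symm
          have h2 : (q:ℝ)^(0:ℝ) ≤ (q:ℝ)^h := Real.rpow_le_rpow_of_exponent_le hQ1.le hh0.le
          rw [Real.rpow_zero] at h2
          linarith
        have := mul_le_mul hqu hqh (by linarith) hQ0.le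
        linarith
      have step3 : (q:ℝ)^e ≤ h⁻¹ := by rw [hedef]; exact hqM1
      have hlogq0 : 0 ≤ Real.log q := Real.log_nonneg hQ1.le
      calc ((q:ℝ)^(Int.fract x) * (q:ℝ)^h) * (q:ℝ)^e - (q:ℝ)^(Int.fract x) * (q:ℝ)^e
          = ((q:ℝ)^(Int.fract x) * ((q:ℝ)^h - 1)) * (q:ℝ)^e := by ring
        _ ≤ (q * (h * Real.log q * q)) * h⁻¹ := by
            refine mul_le_mul step2 step3 hqepos.le (by positivity)
        _ = (q:ℝ)^2 * Real.log q * (h * h⁻¹) := by ring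
        _ = (q:ℝ)^2 * Real.log q := by
            rw [mul_inv_cancel₀ (ne_of_gt hh0), mul_one]
    have hceil : (q:ℝ)^2 * Real.log q ≤ (⌈(q:ℝ)^2 * Real.log q⌉₊ : ℝ) := Nat.le_ceil _
    have hfin : (rr q (M-1) y : ℝ) < ((rr q (M-1) x + k0 : ℕ) : ℝ) := by
      push_cast [hk0def]
      linarith
    exact_mod_cast (Nat.cast_lt.1 hfin).le
  -- apply the key lemma
  have hkey := WW_key (p := p) hq hd hK hf hcont hΨW M hM1 n k0 x y hnx hxy.le hy1 hjump
  -- bound B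
  set B := (p:ℝ) * (2 * ((A * (((M:ℝ)+1) * ((q:ℝ)⁻¹)^M)) * 4)) with hBdef
  have hWb : ‖WW q d p f y - WW q d p f x‖ ≤ ((k0:ℝ)+1) * B := by
    refine hkey.trans_eq ?_
    rw [hBdef, hAdef]
  have hBb : B ≤ 8*(p:ℝ)*A*((2*Real.log h⁻¹+2) * h) := by
    have h1 : ((M:ℝ)+1) * ((q:ℝ)⁻¹)^M ≤ (2*Real.log h⁻¹+2) * h := by
      refine mul_le_mul hMb hqMinv (by positivity) (by linarith)
    calc B = (8*(p:ℝ)*A) * (((M:ℝ)+1) * ((q:ℝ)⁻¹)^M) := by rw [hBdef]; ring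
      _ ≤ (8*(p:ℝ)*A) * ((2*Real.log h⁻¹+2) * h) :=
          mul_le_mul_of_nonneg_left h1 (by positivity)
      _ = 8*(p:ℝ)*A*((2*Real.log h⁻¹+2) * h) := by ring
  have hWbound : ‖WW q d p f y - WW q d p f x‖ ≤ CC q d p K * ((Real.log h⁻¹ + 1) * h) := by
    refine hWb.trans ?_
    have hk1 : ((k0:ℝ)+1) = (⌈(q:ℝ)^2 * Real.log q⌉₊ : ℝ) + 2 := by
      rw [hk0def]; push_cast; ring
    have hB0' : 0 ≤ (2*Real.log h⁻¹+2) * h := by positivity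
    calc ((k0:ℝ)+1) * B ≤ ((k0:ℝ)+1) * (8*(p:ℝ)*A*((2*Real.log h⁻¹+2) * h)) := by
          refine mul_le_mul_of_nonneg_left hBb (by positivity)
      _ = CC q d p K * ((Real.log h⁻¹ + 1) * h) := by
          rw [hk1, CC, hAdef]; ring
  -- the elementary pieces
  set cx : ℝ := (q:ℝ) ^ (-(d:ℝ) * Int.fract x) with hcxdef
  set cy : ℝ := (q:ℝ) ^ (-(d:ℝ) * Int.fract y) with hcydef
  have hcy1 : cy ≤ 1 := by
    rw [hcydef]
    refine Real.rpow_le_one_of_one_le_of_nonpos hQ1.le ?_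
    have := Int.fract_nonneg y
    have hd0 : (0:ℝ) ≤ (d:ℝ) := Nat.cast_nonneg d
    nlinarith
  have hcy0 : 0 ≤ cy := by rw [hcydef]; positivity
  have hcdiff : |cy - cx| ≤ (d:ℝ) * Real.log q * h := by
    have hfr : Int.fract x ≤ Int.fract y := by rw [hfrx, hfry]; linarith
    have hexp : ∀ u : ℝ, (q:ℝ) ^ (-(d:ℝ) * u) = Real.exp (-(Real.log q * ((d:ℝ) * u))) := by
      intro u
      rw [Real.rpow_def_of_pos hQ0]
      ring_nf
    have hlogq0 : 0 ≤ Real.log q := Real.log_nonneg hQ1.le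
    have hd0 : (0:ℝ) ≤ (d:ℝ) := Nat.cast_nonneg d
    have hfx0 : 0 ≤ Int.fract x := Int.fract_nonneg x
    have ha : 0 ≤ Real.log q * ((d:ℝ) * Int.fract x) := by positivity
    have hab : Real.log q * ((d:ℝ) * Int.fract x) ≤ Real.log q * ((d:ℝ) * Int.fract y) :=
      mul_le_mul_of_nonneg_left (mul_le_mul_of_nonneg_left hfr hd0) hlogq0
    have := exp_diff_le ha hab
    rw [hcxdef, hcydef, hexp, hexp]
    have habs : Real.exp (-(Real.log q * ((d:ℝ) * Int.fract y)))
        ≤ Real.exp (-(Real.log q * ((d:ℝ) * Int.fract x))) :=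
      Real.exp_le_exp.2 (by linarith)
    rw [abs_of_nonpos (by linarith)]
    have hfrdiff : Int.fract y - Int.fract x = h := by rw [hfrx, hfry, hhdef]; ring
    nlinarith [this]
  have hWxb : ‖WW q d p f x‖ ≤ (p:ℝ) * (A * 4) := by
    have := WW_norm_le (p := p) hq hd hK hf x
    rwa [hAdef]
  -- decompose Ψ
  have hdecomp : Ψ y - Ψ x = ((-eT : ℝ):ℂ) * (((Int.fract y - Int.fract x : ℝ)):ℂ)
      - ((cy : ℝ):ℂ) * (WW q d p f y - WW q d p f x)
      - (((cy - cx : ℝ)):ℂ) * WW q d p f x := by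
    rw [hΨW x, hΨW y, hcxdef, hcydef]
    push_cast
    ring
  have hnorm : ‖Ψ y - Ψ x‖ ≤ |eT| * h + cy * ‖WW q d p f y - WW q d p f x‖
      + |cy - cx| * ‖WW q d p f x‖ := by
    rw [hdecomp]
    refine (norm_sub_le _ _).trans ?_
    have h1 : ‖((-eT : ℝ):ℂ) * (((Int.fract y - Int.fract x : ℝ)):ℂ)
        - ((cy : ℝ):ℂ) * (WW q d p f y - WW q d p f x)‖
        ≤ |eT| * h + cy * ‖WW q d p f y - WW q d p f x‖ := by
      refine (norm_sub_le _ _).trans ?_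
      have h2 : ‖((-eT : ℝ):ℂ) * (((Int.fract y - Int.fract x : ℝ)):ℂ)‖ = |eT| * h := by
        rw [norm_mul, Complex.norm_real, Complex.norm_real, Real.norm_eq_abs,
          Real.norm_eq_abs, abs_neg]
        congr 1
        rw [abs_of_nonneg (by rw [hfrx, hfry]; linarith)]
        rw [hfrx, hfry, hhdef]; ring
      have h3 : ‖((cy : ℝ):ℂ) * (WW q d p f y - WW q d p f x)‖
          = cy * ‖WW q d p f y - WW q d p f x‖ := by
        rw [norm_mul, Complex.norm_real, Real.norm_eq_abs, abs_of_nonneg hcy0]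
      rw [h2, h3]
    have h4 : ‖(((cy - cx : ℝ)):ℂ) * WW q d p f x‖ = |cy - cx| * ‖WW q d p f x‖ := by
      rw [norm_mul, Complex.norm_real, Real.norm_eq_abs]
    rw [h4]
    linarith
  -- final assembly
  have hfinal1 : cy * ‖WW q d p f y - WW q d p f x‖
      ≤ CC q d p K * ((Real.log h⁻¹ + 1) * h) := by
    calc cy * ‖WW q d p f y - WW q d p f x‖ ≤ 1 * ‖WW q d p f y - WW q d p f x‖ :=
          mul_le_mul_of_nonneg_right hcy1 (norm_nonneg _)
      _ = ‖WW q d p f y - WW q d p f x‖ := one_mul _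
      _ ≤ CC q d p K * ((Real.log h⁻¹ + 1) * h) := hWbound
  have hfinal2 : |cy - cx| * ‖WW q d p f x‖ ≤ ((d:ℝ) * Real.log q * h) * ((p:ℝ) * (A * 4)) := by
    refine mul_le_mul hcdiff hWxb (norm_nonneg _) ?_
    have hlogq0 : 0 ≤ Real.log q := Real.log_nonneg hQ1.le
    positivity
  have hCC0 : 0 ≤ CC q d p K := CC_nonneg hq hK
  calc ‖Ψ y - Ψ x‖ ≤ |eT| * h + cy * ‖WW q d p f y - WW q d p f x‖
      + |cy - cx| * ‖WW q d p f x‖ := hnorm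
    _ ≤ |eT| * h + CC q d p K * ((Real.log h⁻¹ + 1) * h)
      + ((d:ℝ) * Real.log q * h) * ((p:ℝ) * (A * 4)) :=
        add_le_add (add_le_add le_rfl hfinal1) hfinal2
    _ = (|eT| + (p:ℝ)*(A * 4)*((d:ℝ)*Real.log q) + CC q d p K) * h
        + CC q d p K * (h * Real.log h⁻¹) := by ring

lemma Psi_bound {eT : ℝ} {Ψ : ℝ → ℂ} (hq : 2 ≤ q) (hd : 1 ≤ d) (hK : 0 ≤ K)
    (hf : ∀ l r : ℕ, 1 ≤ r → ‖f l r‖ ≤ K * (r : ℝ) ^ (d - 1) * (Real.log r + 1))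
    (hΨW : ∀ x : ℝ, Ψ x = -(eT : ℂ) * ((Int.fract x : ℝ) : ℂ)
      - (((q : ℝ) ^ (-(d : ℝ) * Int.fract x) : ℝ) : ℂ) * WW q d p f x) (x : ℝ) :
    ‖Ψ x‖ ≤ |eT| + (p:ℝ)*((K * (q:ℝ)^(d-1) * (Real.log q + 1)) * 4) := by
  have hQ1 : (1:ℝ) < (q:ℝ) := by exact_mod_cast lt_of_lt_of_le (by norm_num) hq
  rw [hΨW x]
  refine (norm_sub_le _ _).trans ?_
  have h1 : ‖-(eT : ℂ) * ((Int.fract x : ℝ) : ℂ)‖ ≤ |eT| := by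
    simp only [norm_mul, norm_neg, Complex.norm_real, Real.norm_eq_abs]
    have h2 : |Int.fract x| ≤ 1 := by
      rw [abs_of_nonneg (Int.fract_nonneg x)]
      exact (Int.fract_lt_one x).le
    nlinarith [abs_nonneg eT, abs_nonneg (Int.fract x)]
  have h2 : ‖(((q : ℝ) ^ (-(d : ℝ) * Int.fract x) : ℝ) : ℂ) * WW q d p f x‖
      ≤ (p:ℝ)*((K * (q:ℝ)^(d-1) * (Real.log q + 1)) * 4) := by
    rw [norm_mul, Complex.norm_real, Real.norm_eq_abs,
      abs_of_nonneg (Real.rpow_nonneg (by positivity) _)]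
    have hc1 : (q:ℝ) ^ (-(d:ℝ) * Int.fract x) ≤ 1 := by
      refine Real.rpow_le_one_of_one_le_of_nonpos hQ1.le ?_
      have := Int.fract_nonneg x
      have hd0 : (0:ℝ) ≤ (d:ℝ) := Nat.cast_nonneg d
      nlinarith
    have hW := WW_norm_le (p := p) hq hd hK hf x
    have hc0 : (0:ℝ) ≤ (q:ℝ) ^ (-(d:ℝ) * Int.fract x) := Real.rpow_nonneg (by positivity) _
    nlinarith [norm_nonneg (WW q d p f x)]
  linarith

lemma holder_interval {eT : ℝ} {Ψ : ℝ → ℂ} (hq : 2 ≤ q) (hd : 1 ≤ d) (hK : 0 ≤ K)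
    (hf : ∀ l r : ℕ, 1 ≤ r → ‖f l r‖ ≤ K * (r : ℝ) ^ (d - 1) * (Real.log r + 1))
    (hcont : Continuous Ψ)
    (hΨW : ∀ x : ℝ, Ψ x = -(eT : ℂ) * ((Int.fract x : ℝ) : ℂ)
      - (((q : ℝ) ^ (-(d : ℝ) * Int.fract x) : ℝ) : ℂ) * WW q d p f x)
    {α : ℝ} (hα0 : 0 < α) (hα1 : α < 1)
    (n : ℤ) (x y : ℝ) (hnx : (n:ℝ) ≤ x) (hxy : x ≤ y) (hy1 : y ≤ (n:ℝ)+1) :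
    ‖Ψ y - Ψ x‖ ≤
      ((|eT| + (p:ℝ)*((K * (q:ℝ)^(d-1) * (Real.log q + 1)) * 4)*((d:ℝ)*Real.log q)
        + CC q d p K) + CC q d p K * (1-α)⁻¹) * (y-x) ^ α := by
  have hQ1 : (1:ℝ) < (q:ℝ) := by exact_mod_cast lt_of_lt_of_le (by norm_num) hq
  set C1 := |eT| + (p:ℝ)*((K * (q:ℝ)^(d-1) * (Real.log q + 1)) * 4)*((d:ℝ)*Real.log q)
    + CC q d p K with hC1def
  set C2 := CC q d p K with hC2def
  have hC20 : 0 ≤ C2 := CC_nonneg hq hK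
  have hC10 : 0 ≤ C1 := by
    have hA0 := A_nonneg hq hK (d := d)
    have hlogq0 : 0 ≤ Real.log q := Real.log_nonneg hQ1.le
    have h1 : (0:ℝ) ≤ (p:ℝ)*((K * (q:ℝ)^(d-1) * (Real.log q + 1)) * 4)*((d:ℝ)*Real.log q) := by
      positivity
    rw [hC1def]
    have := abs_nonneg eT
    linarith
  have hE0 : 0 ≤ C1 + C2 * (1-α)⁻¹ := by
    have : (0:ℝ) ≤ (1-α)⁻¹ := by
      have : (0:ℝ) < 1 - α := by linarith
      positivity
    positivity
  -- the case of y' strictly inside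
  have key_lt : ∀ y', x ≤ y' → y' < (n:ℝ)+1 → ‖Ψ y' - Ψ x‖ ≤ (C1 + C2 * (1-α)⁻¹) * (y'-x) ^ α := by
    intro y' hxy' hy'1
    rcases eq_or_lt_of_le hxy' with heq | hlt
    · rw [← heq]
      simp only [sub_self, norm_zero]
      rw [Real.zero_rpow (ne_of_gt hα0), mul_zero]
    · have hib := interval_bound (p := p) hq hd hK hf hcont hΨW n x y' hnx hlt hy'1
      set h := y' - x with hhdef
      have hh0 : 0 < h := by rw [hhdef]; linarith
      have hh1 : h < 1 := by rw [hhdef]; linarith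
      have hconv1 : h ≤ h ^ α := by
        have := Real.rpow_le_rpow_of_exponent_ge hh0 hh1.le hα1.le
        rwa [Real.rpow_one] at this
      have hconv2 : h * Real.log h⁻¹ ≤ h ^ α * (1-α)⁻¹ := by
        have h1α : (0:ℝ) < 1 - α := by linarith
        have hlog := Real.log_le_rpow_div (by positivity : (0:ℝ) ≤ h⁻¹) h1α
        have hmul := mul_le_mul_of_nonneg_left hlog hh0.le
        have hid : h * ((h⁻¹) ^ (1-α) / (1-α)) = (h * (h⁻¹) ^ (1-α)) * (1-α)⁻¹ := by
          ring
        have hkey : h * (h⁻¹) ^ (1-α) = h ^ α := by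
          rw [Real.inv_rpow hh0.le, ← Real.rpow_neg hh0.le]
          calc h * h ^ (-(1-α)) = h ^ (1:ℝ) * h ^ (-(1-α)) := by rw [Real.rpow_one]
            _ = h ^ ((1:ℝ) + -(1-α)) := (Real.rpow_add hh0 _ _).symm
            _ = h ^ α := by congr 1; ring
        rw [hid, hkey] at hmul
        exact hmul
      have hrp0 : 0 ≤ h ^ α := Real.rpow_nonneg hh0.le α
      calc ‖Ψ y' - Ψ x‖ ≤ C1 * h + C2 * (h * Real.log h⁻¹) := hib
        _ ≤ C1 * (h ^ α) + C2 * (h ^ α * (1-α)⁻¹) := by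
            exact add_le_add (mul_le_mul_of_nonneg_left hconv1 hC10)
              (mul_le_mul_of_nonneg_left hconv2 hC20)
        _ = (C1 + C2 * (1-α)⁻¹) * h ^ α := by ring
  rcases lt_or_eq_of_le hy1 with hylt | hyeq
  · exact key_lt y hxy hylt
  · -- y = n+1 : take the limit from the left
    rcases eq_or_lt_of_le hxy with heq | hlt
    · rw [← heq]
      simp only [sub_self, norm_zero]
      rw [Real.zero_rpow (ne_of_gt hα0), mul_zero]
    · have hclos : y ∈ closure (Set.Ico x y) := by
        rw [closure_Ico (ne_of_lt hlt)]
        exact ⟨hlt.le, le_refl y⟩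
      haveI : (nhdsWithin y (Set.Ico x y)).NeBot := mem_closure_iff_nhdsWithin_neBot.1 hclos
      have htendL : Filter.Tendsto (fun t => ‖Ψ t - Ψ x‖) (nhdsWithin y (Set.Ico x y))
          (nhds ‖Ψ y - Ψ x‖) :=
        (((hcont.tendsto y).mono_left nhdsWithin_le_nhds).sub tendsto_const_nhds).norm
      have htendR : Filter.Tendsto (fun t => (C1 + C2 * (1-α)⁻¹) * (t-x) ^ α)
          (nhdsWithin y (Set.Ico x y)) (nhds ((C1 + C2 * (1-α)⁻¹) * (y-x) ^ α)) := by
        have h1 : ContinuousAt (fun t : ℝ => t - x) y :=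
          (continuous_id.sub continuous_const).continuousAt
        have h3 : ContinuousAt (fun t : ℝ => (t - x) ^ α) y :=
          ContinuousAt.rpow_const h1 (Or.inr hα0.le)
        exact ((continuousAt_const.mul h3).tendsto).mono_left nhdsWithin_le_nhds
      refine le_of_tendsto_of_tendsto htendL htendR ?_
      filter_upwards [self_mem_nhdsWithin] with t ht
      exact key_lt t ht.1 (by rw [hyeq] at ht; exact ht.2)

end

/-- The `p`-periodic continuous fluctuation `Ψ₁` of the expected output sum of a complete
deterministic subsequential transducer, given explicitly by
`Ψ₁(x) = −e_T {x} − q^{−d{x}} Σ_{l<p} Σ_{m≥0} q^{−dm} e^{2πil(⌊x⌋−m)/p} f_l((x_0…x_m)_q)`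
where `q^{{x}} = (x_0.x_1x_2…)_q` (so `(x_0…x_m)_q = ⌊q^{{x}+m}⌋`) and
`f_l(r) = O(r^{d−1} log r)`, satisfies a Hölder condition of every order `α ∈ (0,1)`. -/
theorem stmt12 (q d p : ℕ) (hq : 2 ≤ q) (hd : 1 ≤ d) (hp : 1 ≤ p)
    (eT : ℝ) (f : ℕ → ℕ → ℂ) (K : ℝ)
    (hf : ∀ l r : ℕ, 1 ≤ r → ‖f l r‖ ≤ K * (r : ℝ) ^ (d - 1) * (Real.log r + 1))
    (Ψ : ℝ → ℂ) (hcont : Continuous Ψ)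
    (hΨ : ∀ x : ℝ, Ψ x = -(eT : ℂ) * ((Int.fract x : ℝ) : ℂ)
      - (((q : ℝ) ^ (-(d : ℝ) * Int.fract x) : ℝ) : ℂ) *
        ∑ l ∈ Finset.range p, ∑' m : ℕ,
          (((q : ℝ) ^ (-(d : ℝ) * (m : ℝ)) : ℝ) : ℂ) *
          Complex.exp (2 * Real.pi * Complex.I * (l : ℂ) *
            (((⌊x⌋ : ℤ) : ℂ) - (m : ℂ)) / (p : ℂ)) *
          f l (Int.toNat ⌊(q : ℝ) ^ (Int.fract x + (m : ℝ))⌋)) :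
    ∀ α : ℝ, α ∈ Set.Ioo (0 : ℝ) 1 →
      ∃ C : ℝ, 0 < C ∧ ∀ x y : ℝ, ‖Ψ y - Ψ x‖ ≤ C * |y - x| ^ α := by
  intro α hα
  obtain ⟨hα0, hα1⟩ := hα
  have hK0 : 0 ≤ K := le_trans (norm_nonneg (f 0 1)) (by simpa using hf 0 1 le_rfl)
  have hΨW : ∀ x : ℝ, Ψ x = -(eT : ℂ) * ((Int.fract x : ℝ) : ℂ)
      - (((q : ℝ) ^ (-(d : ℝ) * Int.fract x) : ℝ) : ℂ) * WW q d p f x := by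
    intro x
    rw [hΨ x]
    rfl
  have hQ1 : (1:ℝ) < (q:ℝ) := by exact_mod_cast lt_of_lt_of_le (by norm_num) hq
  set E := (|eT| + (p:ℝ)*((K * (q:ℝ)^(d-1) * (Real.log q + 1)) * 4)*((d:ℝ)*Real.log q)
    + CC q d p K) + CC q d p K * (1-α)⁻¹ with hEdef
  set Mp := |eT| + (p:ℝ)*((K * (q:ℝ)^(d-1) * (Real.log q + 1)) * 4) with hMdef
  have hA0 := A_nonneg (q := q) (d := d) hq hK0
  have hlogq0 : 0 ≤ Real.log q := Real.log_nonneg hQ1.le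
  have hCC0 : 0 ≤ CC q d p K := CC_nonneg hq hK0
  have hM0 : 0 ≤ Mp := by
    rw [hMdef]
    have h1 : (0:ℝ) ≤ (p:ℝ)*((K * (q:ℝ)^(d-1) * (Real.log q + 1)) * 4) := by positivity
    have := abs_nonneg eT
    linarith
  have hE0 : 0 ≤ E := by
    rw [hEdef]
    have h1 : (0:ℝ) ≤ (p:ℝ)*((K * (q:ℝ)^(d-1) * (Real.log q + 1)) * 4)*((d:ℝ)*Real.log q) := by
      positivity
    have h2 : (0:ℝ) ≤ CC q d p K * (1-α)⁻¹ := by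
      have h3 : (0:ℝ) < 1 - α := by linarith
      positivity
    have := abs_nonneg eT
    linarith
  refine ⟨2*E + 2*Mp + 1, by linarith, ?_⟩
  have main : ∀ x y : ℝ, x ≤ y → ‖Ψ y - Ψ x‖ ≤ (2*E + 2*Mp + 1) * (y - x) ^ α := by
    intro x y hxy
    have hr0 : 0 ≤ (y-x) ^ α := Real.rpow_nonneg (by linarith) α
    rcases le_or_gt (y - x) 1 with hle | hgt
    · set n : ℤ := ⌊x⌋ with hndef
      have hnx : (n:ℝ) ≤ x := Int.floor_le x
      have hx1 : x < (n:ℝ)+1 := Int.lt_floor_add_one x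
      have h2E : ‖Ψ y - Ψ x‖ ≤ 2 * E * (y-x)^α := by
        rcases le_or_gt y ((n:ℝ)+1) with hy1 | hy2
        · have hi := holder_interval (p := p) hq hd hK0 hf hcont hΨW hα0 hα1 n x y hnx hxy hy1
          rw [← hEdef] at hi
          nlinarith [mul_nonneg hE0 hr0]
        · have hxn1 : x ≤ (n:ℝ)+1 := hx1.le
          have i1 := holder_interval (p := p) hq hd hK0 hf hcont hΨW hα0 hα1 n x ((n:ℝ)+1)
            hnx hxn1 le_rfl
          have i2 := holder_interval (p := p) hq hd hK0 hf hcont hΨW hα0 hα1 (n+1)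
            ((n:ℝ)+1) y (by push_cast; linarith) hy2.le (by push_cast; linarith)
          rw [← hEdef] at i1 i2
          push_cast at i2
          have b1 : ((n:ℝ)+1-x)^α ≤ (y-x)^α :=
            Real.rpow_le_rpow (by linarith) (by linarith) hα0.le
          have b2 : (y-((n:ℝ)+1))^α ≤ (y-x)^α :=
            Real.rpow_le_rpow (by linarith) (by linarith) hα0.le
          have htri : ‖Ψ y - Ψ x‖ ≤ ‖Ψ y - Ψ ((n:ℝ)+1)‖ + ‖Ψ ((n:ℝ)+1) - Ψ x‖ :=
            norm_sub_le_norm_sub_add_norm_sub _ _ _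
          have m1 := mul_le_mul_of_nonneg_left b1 hE0
          have m2 := mul_le_mul_of_nonneg_left b2 hE0
          linarith
      nlinarith [mul_nonneg hM0 hr0]
    · have hb1 := Psi_bound (p := p) hq hd hK0 hf hΨW x
      have hb2 := Psi_bound (p := p) hq hd hK0 hf hΨW y
      rw [← hMdef] at hb1 hb2
      have hN : ‖Ψ y - Ψ x‖ ≤ 2*Mp := (norm_sub_le _ _).trans (by linarith)
      have hr1 : 1 ≤ (y-x)^α := Real.one_le_rpow (by linarith) hα0.le
      have hmm : (2*Mp) * 1 ≤ (2*E + 2*Mp + 1) * ((y-x)^α) :=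
        mul_le_mul (by linarith) hr1 (by norm_num) (by linarith)
      linarith
  intro x y
  rcases le_total x y with hxy | hyx
  · have := main x y hxy
    rwa [abs_of_nonneg (by linarith : (0:ℝ) ≤ y - x)]
  · have := main y x hyx
    rw [norm_sub_rev]
    rwa [abs_sub_comm, abs_of_nonneg (by linarith : (0:ℝ) ≤ x - y)]
end
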